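/- arXiv:1111.6834 — 5 statements merged into one kernel-verified Lean document; each statement's English description precedes it below -/
import Mathlib

section
/- Let (E_m)_{m≥0} be the events that the unit cube is m-good in Mandelbrot fractal percolation with parameters p_0 and N, where k ≤ (p_0 - 2δ)N^d for some δ > 0. The recursion P(E_0) = P(Bin(N^d, p_0) ≥ k) and P(E_{m+1}) = P(Bin(N^d, p_0·P(E_m)) ≥ k) holds, and if p_0/(4δ²N^d) < δ and N is large enough, then by induction P(E_m) ≥ 1 - 1/(4δ²N^d) for all m ≥ 0. In particular, the statement that for a sequence q_m defined by q_0 = P(Bin(N^d,p_0) ≥ k) and q_{m+1} = P(Bin(N^d, p_0 q_m) ≥ k), the inequality q_m ≥ 1 - 1/(4δ²N^d) holds for all m, under the stated hypotheses. -/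
/-- `P(Bin(n,q) ≥ k)` for a binomial random variable with parameters `n` and `q`. -/
noncomputable def binomGe (n k : ℕ) (q : ℝ) : ℝ :=
  ∑ i ∈ Finset.Icc k n, (n.choose i : ℝ) * q ^ i * (1 - q) ^ (n - i)

open Finset

lemma sum_w (n : ℕ) (r s : ℝ) :
    ∑ i ∈ range (n+1), (n.choose i : ℝ) * r ^ i * s ^ (n - i) = (r + s) ^ n := by
  rw [add_pow]
  exact Finset.sum_congr rfl fun i _ => by ring

lemma sum_i (n : ℕ) (r s : ℝ) :
    ∑ i ∈ range (n+1), (i : ℝ) * (n.choose i : ℝ) * r ^ i * s ^ (n - i)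
      = n * r * (r + s) ^ (n - 1) := by
  cases n with
  | zero => simp
  | succ m =>
    rw [Finset.sum_range_succ']
    have h : ∀ i ∈ range (m+1),
        ((i+1 : ℕ) : ℝ) * ((m+1).choose (i+1) : ℝ) * r ^ (i+1) * s ^ (m+1-(i+1))
        = ((m+1 : ℕ) : ℝ) * r * ((m.choose i : ℝ) * r ^ i * s ^ (m - i)) := by
      intro i hi
      have h := Nat.add_one_mul_choose_eq m i
      have h2 : ((m+1 : ℕ) : ℝ) * (m.choose i : ℝ)
          = ((m+1).choose (i+1) : ℝ) * ((i+1 : ℕ) : ℝ) := by exact_mod_cast congrArg Nat.cast h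
      have hs : m + 1 - (i+1) = m - i := by omega
      rw [hs, pow_succ, show ((i+1:ℕ):ℝ) * ((m+1).choose (i+1) : ℝ)
        = ((m+1:ℕ):ℝ) * (m.choose i : ℝ) from by rw [h2]; ring]
      ring
    rw [Finset.sum_congr rfl h, ← Finset.mul_sum, sum_w]
    simp

lemma sum_ii (n : ℕ) (r s : ℝ) :
    ∑ i ∈ range (n+1), (i:ℝ) * ((i:ℝ)-1) * (n.choose i : ℝ) * r ^ i * s ^ (n - i)
      = n * ((n:ℝ)-1) * r ^ 2 * (r + s) ^ (n - 2) := by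
  cases n with
  | zero => simp
  | succ m =>
    rw [Finset.sum_range_succ']
    have h : ∀ i ∈ range (m+1),
        ((i+1 : ℕ) : ℝ) * (((i+1:ℕ):ℝ)-1) * ((m+1).choose (i+1) : ℝ) * r ^ (i+1) * s ^ (m+1-(i+1))
        = ((m+1 : ℕ) : ℝ) * r * ((i:ℝ) * (m.choose i : ℝ) * r ^ i * s ^ (m - i)) := by
      intro i hi
      have h := Nat.add_one_mul_choose_eq m i
      have h2 : ((m+1 : ℕ) : ℝ) * (m.choose i : ℝ)
          = ((m+1).choose (i+1) : ℝ) * ((i+1 : ℕ) : ℝ) := by exact_mod_cast congrArg Nat.cast h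
      have hs : m + 1 - (i+1) = m - i := by omega
      rw [hs, pow_succ]
      push_cast
      push_cast at h2
      linear_combination (-(i:ℝ) * (r ^ i * r * s ^ (m - i))) * h2
    rw [Finset.sum_congr rfl h, ← Finset.mul_sum, sum_i]
    push_cast
    simp
    ring

lemma sum_var (n : ℕ) (r : ℝ) :
    ∑ i ∈ range (n+1), ((i:ℝ) - n * r) ^ 2 * ((n.choose i : ℝ) * r ^ i * (1-r) ^ (n - i))
      = n * r * (1 - r) := by
  have e : ∀ i ∈ range (n+1), ((i:ℝ) - n * r) ^ 2 * ((n.choose i : ℝ) * r ^ i * (1-r) ^ (n - i))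
      = (i:ℝ) * ((i:ℝ)-1) * (n.choose i : ℝ) * r ^ i * (1-r) ^ (n - i)
        + (1 - 2 * n * r) * ((i:ℝ) * (n.choose i : ℝ) * r ^ i * (1-r) ^ (n - i))
        + ((n:ℝ) * r) ^ 2 * ((n.choose i : ℝ) * r ^ i * (1-r) ^ (n - i)) := by
    intro i _; ring
  rw [Finset.sum_congr rfl e, Finset.sum_add_distrib, Finset.sum_add_distrib,
    ← Finset.mul_sum, ← Finset.mul_sum, sum_ii, sum_i, sum_w]
  have : r + (1 - r) = 1 := by ring
  rw [this, one_pow, one_pow, one_pow]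
  ring

lemma binomGe_le_one (n k : ℕ) (r : ℝ) (hr0 : 0 ≤ r) (hr1 : r ≤ 1) :
    binomGe n k r ≤ 1 := by
  have h0 : ∀ i, 0 ≤ (n.choose i : ℝ) * r ^ i * (1-r) ^ (n - i) := fun i =>
    mul_nonneg (mul_nonneg (Nat.cast_nonneg _) (pow_nonneg hr0 _))
      (pow_nonneg (by linarith) _)
  have hsub : Finset.Icc k n ⊆ range (n+1) := by
    intro i hi
    simp only [Finset.mem_Icc] at hi
    simp [Finset.mem_range]; omega
  calc binomGe n k r ≤ ∑ i ∈ range (n+1), (n.choose i : ℝ) * r ^ i * (1-r) ^ (n - i) :=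
        Finset.sum_le_sum_of_subset_of_nonneg hsub (fun i _ _ => h0 i)
    _ = 1 := by rw [sum_w]; norm_num

lemma binomGe_tail (n k : ℕ) (hn : 0 < n) (p r δ : ℝ) (hδ : 0 < δ)
    (hr0 : 0 ≤ r) (hr1 : r ≤ 1)
    (hkp : (k : ℝ) ≤ p * n) (hpr : p + δ ≤ r) :
    1 - 1 / (4 * δ ^ 2 * n) ≤ binomGe n k r := by
  set w : ℕ → ℝ := fun i => (n.choose i : ℝ) * r ^ i * (1-r) ^ (n - i) with hw
  have h0 : ∀ i, 0 ≤ w i := fun i =>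
    mul_nonneg (mul_nonneg (Nat.cast_nonneg _) (pow_nonneg hr0 _))
      (pow_nonneg (by linarith) _)
  have hnR : (0:ℝ) < n := by exact_mod_cast hn
  have hkn : k ≤ n := by
    have : (k:ℝ) ≤ n := by nlinarith
    exact_mod_cast this
  -- split the full sum
  have hsplit : ∑ i ∈ range k, w i + binomGe n k r = 1 := by
    have : binomGe n k r = ∑ i ∈ Finset.Ico k (n+1), w i := by
      rw [binomGe, Finset.Ico_add_one_right_eq_Icc]
    rw [this]
    rw [Finset.range_eq_Ico, Finset.sum_Ico_consecutive _ (Nat.zero_le k) (by omega),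
      ← Finset.range_eq_Ico]
    rw [hw]; rw [sum_w]; norm_num
  -- bound the lower tail
  have key : ∀ i ∈ range k, (δ * n) ^ 2 * w i ≤ ((i:ℝ) - n * r) ^ 2 * w i := by
    intro i hi
    have hik : (i:ℝ) < k := by exact_mod_cast Finset.mem_range.mp hi
    have h1 : δ * n ≤ n * r - i := by nlinarith
    have h2 : (δ * n) ^ 2 ≤ ((i:ℝ) - n * r) ^ 2 := by
      nlinarith [mul_self_le_mul_self (by positivity : (0:ℝ) ≤ δ * n) h1]
    exact mul_le_mul_of_nonneg_right h2 (h0 i)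
  have htail : (δ * n) ^ 2 * ∑ i ∈ range k, w i ≤ n * r * (1 - r) := by
    rw [Finset.mul_sum]
    calc ∑ i ∈ range k, (δ * n) ^ 2 * w i ≤ ∑ i ∈ range k, ((i:ℝ) - n * r) ^ 2 * w i :=
          Finset.sum_le_sum key
      _ ≤ ∑ i ∈ range (n+1), ((i:ℝ) - n * r) ^ 2 * w i :=
          Finset.sum_le_sum_of_subset_of_nonneg
            (by intro i hi; simp only [Finset.mem_range] at *; omega)
            (fun i _ _ => mul_nonneg (sq_nonneg _) (h0 i))
      _ = n * r * (1 - r) := sum_var n r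
  have hvar : (n:ℝ) * r * (1 - r) ≤ n / 4 := by
    nlinarith [mul_nonneg hnR.le (sq_nonneg (r - 1/2))]
  have hfinal : ∑ i ∈ range k, w i ≤ 1 / (4 * δ ^ 2 * n) := by
    have hS : δ ^ 2 * (n:ℝ) ^ 2 * ∑ i ∈ range k, w i ≤ n / 4 := by nlinarith [htail, hvar]
    have h4 : (0:ℝ) < δ ^ 2 * n ^ 2 := by positivity
    calc ∑ i ∈ range k, w i = (δ ^ 2 * (n:ℝ) ^ 2 * ∑ i ∈ range k, w i) / (δ ^ 2 * n ^ 2) := by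
          field_simp
      _ ≤ ((n:ℝ) / 4) / (δ ^ 2 * n ^ 2) := by gcongr
      _ = 1 / (4 * δ ^ 2 * n) := by field_simp
  linarith [hsplit, hfinal]


/-- The recursion `q_0 = P(Bin(N^d,p₀) ≥ k)`, `q_{m+1} = P(Bin(N^d, p₀ q_m) ≥ k)` for the
probabilities that the unit cube is `m`-good satisfies `q_m ≥ 1 - 1/(4δ²N^d)` for all `m`,
provided `k ≤ (p₀ - 2δ)N^d`, `p₀(1 - 1/(4δ²N^d)) > (p₀ - 2δ) + δ` and `p₀/(4δ²N^d) < δ`. -/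
theorem stmt9 (N d : ℕ) (hN : 2 ≤ N) (hd : 2 ≤ d)
    (p₀ δ : ℝ) (hp₀ : 0 < p₀) (hp₀1 : p₀ < 1) (hδ : 0 < δ)
    (k : ℕ) (hk : (k : ℝ) ≤ (p₀ - 2 * δ) * (N : ℝ) ^ d)
    (h1 : p₀ * (1 - 1 / (4 * δ ^ 2 * (N : ℝ) ^ d)) > (p₀ - 2 * δ) + δ)
    (h2 : p₀ / (4 * δ ^ 2 * (N : ℝ) ^ d) < δ)
    (q : ℕ → ℝ)
    (hq0 : q 0 = binomGe (N ^ d) k p₀)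
    (hqs : ∀ m, q (m + 1) = binomGe (N ^ d) k (p₀ * q m)) :
    ∀ m, 1 - 1 / (4 * δ ^ 2 * (N : ℝ) ^ d) ≤ q m := by
  have hnd : ((N ^ d : ℕ) : ℝ) = (N : ℝ) ^ d := by push_cast; ring
  have hn : 0 < N ^ d := pow_pos (by omega) d
  have hNR : (0:ℝ) < (N : ℝ) ^ d := by positivity
  have hp : 0 ≤ p₀ - 2 * δ := by
    nlinarith [Nat.cast_nonneg (α := ℝ) k]
  set x : ℝ := 1 / (4 * δ ^ 2 * (N : ℝ) ^ d) with hx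
  have hx0 : 0 < x := by positivity
  have hpx : p₀ * x < δ := by nlinarith
  have hc0 : (0:ℝ) < 1 - x := by nlinarith
  have key : ∀ m, 1 - x ≤ q m ∧ q m ≤ 1 := by
    intro m
    induction m with
    | zero =>
      rw [hq0]
      constructor
      · have := binomGe_tail (N ^ d) k hn (p₀ - 2 * δ) p₀ δ hδ hp₀.le hp₀1.le
          (by rw [hnd]; exact hk) (by linarith)
        rwa [hnd] at this
      · exact binomGe_le_one _ _ _ hp₀.le hp₀1.le
    | succ m ih =>
      obtain ⟨ih1, ih2⟩ := ih
      have hr0 : 0 ≤ p₀ * q m := by nlinarith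
      have hr1 : p₀ * q m ≤ 1 := by nlinarith
      have hpr : (p₀ - 2 * δ) + δ ≤ p₀ * q m := by nlinarith
      rw [hqs]
      constructor
      · have := binomGe_tail (N ^ d) k hn (p₀ - 2 * δ) (p₀ * q m) δ hδ hr0 hr1
          (by rw [hnd]; exact hk) hpr
        rwa [hnd] at this
      · exact binomGe_le_one _ _ _ hr0 hr1
  exact fun m => (key m).1
end

section
/- Let G_2 be obtained by selecting k vertices uniformly at random from a set B of size n and independently retaining each selected vertex with probability 1-ε, and let R ~ Binomial(n, π) be independent. Define G_3 as follows: if |G_2| ≥ M and R ≤ M, select R vertices uniformly from G_2; otherwise select R vertices of B uniformly and independently of G_2. Then G_3 is distributed as a Bernoulli(π) product random subset of B, and P(G_3 ⊆ G_2) ≥ P(|G_2| ≥ M, R ≤ M). -/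
open MeasureTheory
open scoped ENNReal

open Finset in
/-- Number of `b`-subsets of the universe containing a fixed set `A`. -/
lemma stmt12_card_supersets {α : Type*} [Fintype α] [DecidableEq α] (A : Finset α) {b : ℕ}
    (hab : A.card ≤ b) :
    ((Finset.powersetCard b (univ : Finset α)).filter (fun B => A ⊆ B)).card
      = (Fintype.card α - A.card).choose (b - A.card) := by
  rw [← Finset.card_compl A, ← Finset.card_powersetCard]
  apply Finset.card_bij' (fun B _ => B \ A) (fun C _ => C ∪ A)
  · intro B hB
    simp only [mem_filter, mem_powersetCard] at hB
    simp only [mem_powersetCard]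
    refine ⟨fun x hx => ?_, ?_⟩
    · simp only [Finset.mem_sdiff] at hx
      simp [hx.2]
    · rw [Finset.card_sdiff_of_subset hB.2, hB.1.2]
  · intro C hC
    simp only [mem_powersetCard] at hC
    have hdisj : Disjoint C A := by
      rw [Finset.disjoint_left]
      intro x hx
      have := hC.1 hx
      simpa using this
    simp only [mem_filter, mem_powersetCard]
    refine ⟨⟨Finset.subset_univ _, ?_⟩, Finset.subset_union_right⟩
    rw [Finset.card_union_of_disjoint hdisj, hC.2]
    have := Finset.card_le_card hC.1
    rw [Finset.card_compl] at this
    omega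
  · intro B hB
    simp only [mem_filter] at hB
    exact Finset.sdiff_union_of_subset hB.2
  · intro C hC
    simp only [mem_powersetCard] at hC
    have hdisj : Disjoint C A := by
      rw [Finset.disjoint_left]
      intro x hx
      have := hC.1 hx
      simpa using this
    rw [Finset.union_sdiff_distrib, Finset.sdiff_self, Finset.union_empty,
      Finset.sdiff_eq_self_of_disjoint hdisj]

open Finset in
lemma stmt12_sum_binom_pmf (n : ℕ) (x : ℝ) :
    ∑ r ∈ range (n + 1), (n.choose r : ℝ) * x ^ r * (1 - x) ^ (n - r) = 1 := by
  have h := add_pow x (1 - x) n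
  simp only [add_sub_cancel, one_pow] at h
  have h2 : ∑ r ∈ range (n + 1), (n.choose r : ℝ) * x ^ r * (1 - x) ^ (n - r)
      = ∑ m ∈ range (n + 1), x ^ m * (1 - x) ^ (n - m) * (n.choose m : ℝ) :=
    Finset.sum_congr rfl fun r _ => by ring
  rw [h2]
  exact h.symm

open Finset in
lemma stmt12_sum_g_one (n k : ℕ) (hk : k ≤ n) (ε : ℝ) :
    ∑ b ∈ range (n + 1), (n.choose b : ℝ) *
      (if b ≤ k then ((n - b).choose (k - b) : ℝ) / (n.choose k) * (1 - ε) ^ b * ε ^ (k - b)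
        else 0) = 1 := by
  have hnk : (0 : ℝ) < n.choose k := by exact_mod_cast Nat.choose_pos hk
  rw [← Finset.sum_subset (Finset.range_subset_range.mpr (by omega : k + 1 ≤ n + 1))
    (fun b _ hb => by
      rw [if_neg (by simp only [Finset.mem_range] at hb ⊢; omega), mul_zero])]
  have key : ∀ b ∈ range (k + 1), (n.choose b : ℝ) *
      (if b ≤ k then ((n - b).choose (k - b) : ℝ) / (n.choose k) * (1 - ε) ^ b * ε ^ (k - b)
        else 0) = (k.choose b : ℝ) * (1 - ε) ^ b * ε ^ (k - b) := by
    intro b hb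
    rw [Finset.mem_range] at hb
    have hbk : b ≤ k := by omega
    rw [if_pos hbk]
    have hid : (n.choose k : ℝ) * (k.choose b : ℝ)
        = (n.choose b : ℝ) * ((n - b).choose (k - b) : ℝ) := by
      exact_mod_cast congrArg (Nat.cast (R := ℝ)) (Nat.choose_mul (n := n) hbk)
    field_simp
    linear_combination (-((1 - ε) ^ b * ε ^ (k - b))) * hid
  rw [Finset.sum_congr rfl key]
  have h := stmt12_sum_binom_pmf k (1 - ε)
  simp only [sub_sub_cancel] at h
  exact h

open Finset in
lemma stmt12_main_real_sum {α : Type*} [Fintype α] [DecidableEq α] {n : ℕ}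
    (hn : n = Fintype.card α)
    (g : ℕ → ℝ) (hg : ∑ b ∈ range (n + 1), (n.choose b : ℝ) * g b = 1)
    (qa M : ℝ) (A : Finset α) :
    ∑ B : Finset α, (if M ≤ (B.card : ℝ) ∧ (A.card : ℝ) ≤ M then
        (if A ⊆ B then g B.card * qa / (B.card.choose A.card) else 0)
      else g B.card * qa / (n.choose A.card))
    = qa / (n.choose A.card) := by
  set a := A.card with ha
  have han : a ≤ n := hn ▸ A.card_le_univ
  have hna : (0 : ℝ) < n.choose a := by exact_mod_cast Nat.choose_pos han
  set f : Finset α → ℝ := fun B => (if M ≤ (B.card : ℝ) ∧ (a : ℝ) ≤ M then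
        (if A ⊆ B then g B.card * qa / (B.card.choose a) else 0)
      else g B.card * qa / (n.choose a)) with hf
  have hmaps : ∀ B ∈ (univ : Finset (Finset α)), B.card ∈ range (n + 1) := by
    intro B _
    rw [mem_range]
    exact Nat.lt_succ_of_le (hn ▸ B.card_le_univ)
  rw [← Finset.sum_fiberwise_of_maps_to hmaps f]
  have hfiber : ∀ b ∈ range (n + 1),
      ∑ B ∈ univ.filter (fun B => B.card = b), f B
        = (n.choose b : ℝ) * (g b * qa / (n.choose a)) := by
    intro b hb
    rw [mem_range] at hb
    have hbn : b ≤ n := by omega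
    have hflt : univ.filter (fun B : Finset α => B.card = b) = powersetCard b univ := by
      ext B
      simp [Finset.mem_powersetCard]
    rw [hflt]
    by_cases hgd : M ≤ (b : ℝ) ∧ (a : ℝ) ≤ M
    · have hab : a ≤ b := by exact_mod_cast Nat.cast_le.mp (le_trans hgd.2 hgd.1)
      have hba : (0 : ℝ) < b.choose a := by exact_mod_cast Nat.choose_pos hab
      have hstep : ∑ B ∈ powersetCard b univ, f B
          = ∑ B ∈ powersetCard b univ, (if A ⊆ B then g b * qa / (b.choose a) else 0) := by
        refine Finset.sum_congr rfl fun B hB => ?_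
        have hBb : B.card = b := (mem_powersetCard.mp hB).2
        rw [hf]
        simp only [hBb, if_pos hgd]
      rw [hstep, ← Finset.sum_filter, Finset.sum_const, stmt12_card_supersets A hab,
        nsmul_eq_mul, ← hn, ← ha]
      have hid : (n.choose b : ℝ) * (b.choose a : ℝ)
          = (n.choose a : ℝ) * ((n - a).choose (b - a) : ℝ) := by
        exact_mod_cast congrArg (Nat.cast (R := ℝ)) (Nat.choose_mul (n := n) hab)
      field_simp
      linear_combination (-(g b * qa)) * hid
    · have hstep : ∑ B ∈ powersetCard b univ, f B
          = ∑ _B ∈ powersetCard b (univ : Finset α), (g b * qa / (n.choose a)) := by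
        refine Finset.sum_congr rfl fun B hB => ?_
        have hBb : B.card = b := (mem_powersetCard.mp hB).2
        rw [hf]
        simp only [hBb, if_neg hgd]
      rw [hstep, Finset.sum_const, Finset.card_powersetCard, Finset.card_univ, ← hn,
        nsmul_eq_mul]
  rw [Finset.sum_congr rfl hfiber]
  have : ∑ b ∈ range (n + 1), (n.choose b : ℝ) * (g b * qa / (n.choose a))
      = (∑ b ∈ range (n + 1), (n.choose b : ℝ) * g b) * (qa / (n.choose a)) := by
    rw [Finset.sum_mul]
    exact Finset.sum_congr rfl fun b _ => by ring
  rw [this, hg, one_mul]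


/-- The coupling construction of Lemma 12: `G₂` is a uniform `k`-subset of a finite set `B`
(of size `n`) thinned by independent Bernoulli(`1-ε`) retention; `R ~ Bin(n,π)` is
independent of `G₂`; `G₃` is a uniform `R`-subset of `G₂` on the event
`{|G₂| ≥ M, R ≤ M}` and a uniform `R`-subset of `B` (independent of `G₂`) otherwise.
Then `G₃` is distributed as Bernoulli(`π`) site percolation on `B`, and
`P(G₃ ⊆ G₂) ≥ P(|G₂| ≥ M, R ≤ M)`. -/
theorem stmt12 {Ω α : Type*} [MeasurableSpace Ω] [Fintype α] [DecidableEq α]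
    (P : Measure Ω) [IsProbabilityMeasure P]
    (n k : ℕ) (hn : n = Fintype.card α) (hk : k ≤ n)
    (ε π M : ℝ) (hε : 0 < ε) (hε1 : ε < 1) (hπ : 0 < π) (hπ1 : π < 1)
    (G₂ G₃ : Ω → Finset α) (R : Ω → ℕ)
    -- law of `G₂`: uniform `k`-subset thinned by Bernoulli(1-ε)
    (hG₂ : ∀ B : Finset α, P {ω | G₂ ω = B} =
      ENNReal.ofReal (if B.card ≤ k then
        ((n - B.card).choose (k - B.card) : ℝ) / (n.choose k) *
          (1 - ε) ^ B.card * ε ^ (k - B.card) else 0))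
    -- law of `R`: binomial(n, π)
    (hR : ∀ r : ℕ, P {ω | R ω = r} =
      ENNReal.ofReal ((n.choose r : ℝ) * π ^ r * (1 - π) ^ (n - r)))
    -- `R` is independent of `G₂`
    (hRG₂ : ∀ (B : Finset α) (r : ℕ),
      P ({ω | G₂ ω = B} ∩ {ω | R ω = r}) = P {ω | G₂ ω = B} * P {ω | R ω = r})
    -- `G₃` always has exactly `R` elements
    (hcard : ∀ ω, (G₃ ω).card = R ω)
    -- on the good event, `G₃` is a uniform `R`-subset of `G₂`
    (hgood : ∀ (B : Finset α) (r : ℕ) (A : Finset α), M ≤ (B.card : ℝ) → (r : ℝ) ≤ M →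
      P ({ω | G₃ ω = A} ∩ {ω | G₂ ω = B} ∩ {ω | R ω = r}) =
        if A ⊆ B ∧ A.card = r then
          P ({ω | G₂ ω = B} ∩ {ω | R ω = r}) / (B.card.choose r : ℝ≥0∞) else 0)
    -- otherwise, `G₃` is a uniform `R`-subset of the whole ground set
    (hbad : ∀ (B : Finset α) (r : ℕ) (A : Finset α), ¬(M ≤ (B.card : ℝ) ∧ (r : ℝ) ≤ M) →
      P ({ω | G₃ ω = A} ∩ {ω | G₂ ω = B} ∩ {ω | R ω = r}) =
        if A.card = r then
          P ({ω | G₂ ω = B} ∩ {ω | R ω = r}) / (n.choose r : ℝ≥0∞) else 0) :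
    (∀ A : Finset α, P {ω | G₃ ω = A} =
        ENNReal.ofReal (π ^ A.card * (1 - π) ^ (n - A.card))) ∧
      P {ω | M ≤ ((G₂ ω).card : ℝ) ∧ (R ω : ℝ) ≤ M} ≤ P {ω | G₃ ω ⊆ G₂ ω} := by

  classical
  -- abbreviations for the densities
  set g : ℕ → ℝ := fun b => if b ≤ k then
      ((n - b).choose (k - b) : ℝ) / (n.choose k) * (1 - ε) ^ b * ε ^ (k - b) else 0 with hgdef
  set q : ℕ → ℝ := fun r => (n.choose r : ℝ) * π ^ r * (1 - π) ^ (n - r) with hqdef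
  have hg0 : ∀ b, 0 ≤ g b := by
    intro b
    rw [hgdef]
    dsimp only
    split
    · exact mul_nonneg (mul_nonneg (div_nonneg (Nat.cast_nonneg _) (Nat.cast_nonneg _))
        (pow_nonneg (by linarith) _)) (pow_nonneg hε.le _)
    · exact le_rfl
  have hq0 : ∀ r, 0 ≤ q r := by
    intro r
    rw [hqdef]
    exact mul_nonneg (mul_nonneg (Nat.cast_nonneg _) (pow_nonneg hπ.le _))
      (pow_nonneg (by linarith) _)
  have hG₂' : ∀ B : Finset α, P {ω | G₂ ω = B} = ENNReal.ofReal (g B.card) := fun B => hG₂ B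
  have hR' : ∀ r : ℕ, P {ω | R ω = r} = ENNReal.ofReal (q r) := fun r => hR r
  have hQ : ∀ (B : Finset α) (r : ℕ),
      P ({ω | G₂ ω = B} ∩ {ω | R ω = r}) = ENNReal.ofReal (g B.card * q r) := by
    intro B r
    rw [hRG₂ B r, hG₂' B, hR' r, ← ENNReal.ofReal_mul (hg0 _)]
  have hsumg : ∑ b ∈ Finset.range (n + 1), (n.choose b : ℝ) * g b = 1 := by
    rw [hgdef]
    exact stmt12_sum_g_one n k hk ε
  have hsumq : ∑ r ∈ Finset.range (n + 1), q r = 1 := by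
    rw [hqdef]
    exact stmt12_sum_binom_pmf n π
  -- the pieces of the partition
  set E : Finset α × Finset α × ℕ → Set Ω :=
    fun i => {ω | G₃ ω = i.1} ∩ {ω | G₂ ω = i.2.1} ∩ {ω | R ω = i.2.2} with hE
  have hPE : ∀ (A B : Finset α) (r : ℕ), P (E (A, B, r))
      = P ({ω | G₃ ω = A} ∩ {ω | G₂ ω = B} ∩ {ω | R ω = r}) := fun _ _ _ => rfl
  set I : Finset (Finset α × Finset α × ℕ) :=
    Finset.univ ×ˢ Finset.univ ×ˢ Finset.range (n + 1) with hI
  have hRle : ∀ ω, R ω ≤ n := by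
    intro ω
    rw [← hcard ω, hn]
    exact Finset.card_le_univ _
  have hmemI : ∀ ω, (G₃ ω, G₂ ω, R ω) ∈ I := by
    intro ω
    rw [hI]
    simp [Finset.mem_product, Nat.lt_succ_iff, hRle ω]
  have hmemE : ∀ ω, ω ∈ E (G₃ ω, G₂ ω, R ω) := fun ω => ⟨⟨rfl, rfl⟩, rfl⟩
  -- summing over the first coordinate
  have hfiber : ∀ (B : Finset α) (r : ℕ), r ≤ n →
      ∑ A' : Finset α, P (E (A', B, r)) = P ({ω | G₂ ω = B} ∩ {ω | R ω = r}) := by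
    intro B r hrn
    have hQtop : P ({ω | G₂ ω = B} ∩ {ω | R ω = r}) ≠ ⊤ := measure_ne_top _ _
    by_cases hgd : M ≤ (B.card : ℝ) ∧ (r : ℝ) ≤ M
    · have hrB : r ≤ B.card := by exact_mod_cast Nat.cast_le.mp (le_trans hgd.2 hgd.1)
      have hval : ∀ A' : Finset α, P (E (A', B, r)) =
          if A' ∈ Finset.powersetCard r B then
            P ({ω | G₂ ω = B} ∩ {ω | R ω = r}) / (B.card.choose r : ℝ≥0∞) else 0 := by
        intro A'
        rw [hPE, hgood B r A' hgd.1 hgd.2]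
        congr 1
        simp [Finset.mem_powersetCard, and_comm]
      rw [Finset.sum_congr rfl fun A' _ => hval A', Finset.sum_ite_mem,
        Finset.univ_inter, Finset.sum_const, Finset.card_powersetCard, nsmul_eq_mul]
      exact ENNReal.mul_div_cancel'
        (fun h => absurd h (by exact_mod_cast (Nat.choose_pos hrB).ne'))
        (fun h => absurd h (ENNReal.natCast_ne_top _))
    · have hval : ∀ A' : Finset α, P (E (A', B, r)) =
          if A' ∈ Finset.powersetCard r (Finset.univ : Finset α) then
            P ({ω | G₂ ω = B} ∩ {ω | R ω = r}) / (n.choose r : ℝ≥0∞) else 0 := by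
        intro A'
        rw [hPE, hbad B r A' hgd]
        congr 1
        simp [Finset.mem_powersetCard]
      rw [Finset.sum_congr rfl fun A' _ => hval A', Finset.sum_ite_mem,
        Finset.univ_inter, Finset.sum_const, Finset.card_powersetCard,
        Finset.card_univ, ← hn, nsmul_eq_mul]
      exact ENNReal.mul_div_cancel'
        (fun h => absurd h (by exact_mod_cast (Nat.choose_pos hrn).ne'))
        (fun h => absurd h (ENNReal.natCast_ne_top _))
  -- total mass of the pieces is 1
  have htotal : ∑ i ∈ I, P (E i) = 1 := by
    rw [hI, Finset.sum_product, Finset.sum_comm, Finset.sum_product]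
    have h1 : ∀ B : Finset α, ∑ r ∈ Finset.range (n + 1), ∑ A' : Finset α, P (E (A', B, r))
        = ENNReal.ofReal (g B.card) := by
      intro B
      have h2 : ∀ r ∈ Finset.range (n + 1),
          ∑ A' : Finset α, P (E (A', B, r)) = ENNReal.ofReal (g B.card * q r) := by
        intro r hr
        rw [Finset.mem_range, Nat.lt_succ_iff] at hr
        rw [hfiber B r hr, hQ B r]
      rw [Finset.sum_congr rfl h2, ← ENNReal.ofReal_sum_of_nonneg
        (fun r _ => mul_nonneg (hg0 _) (hq0 _)), ← Finset.mul_sum, hsumq, mul_one]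
    rw [Finset.sum_congr rfl fun B _ => h1 B, ← ENNReal.ofReal_sum_of_nonneg
      (fun B _ => hg0 _)]
    have h3 : ∑ B : Finset α, g B.card = 1 := by
      have h4 := Finset.sum_powerset_apply_card g (x := (Finset.univ : Finset α))
      rw [Finset.powerset_univ, Finset.card_univ, ← hn] at h4
      rw [h4]
      rw [← hsumg]
      exact Finset.sum_congr rfl fun b _ => (nsmul_eq_mul _ _)
    rw [h3, ENNReal.ofReal_one]
  -- measure of a union of pieces is the sum of their measures
  have hpart : ∀ s : Finset (Finset α × Finset α × ℕ), s ⊆ I →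
      P (⋃ i ∈ s, E i) = ∑ i ∈ s, P (E i) := by
    intro s hs
    refine le_antisymm (measure_biUnion_finset_le s E) ?_
    have hsum : ∑ i ∈ I \ s, P (E i) + ∑ i ∈ s, P (E i) = 1 := by
      rw [Finset.sum_sdiff hs, htotal]
    have hT' : ∑ i ∈ I \ s, P (E i) ≠ ⊤ := by
      intro h
      rw [h] at hsum
      simp at hsum
    have hcover : (⋃ i ∈ s, E i)ᶜ ⊆ ⋃ i ∈ I \ s, E i := by
      intro ω hω
      simp only [Set.mem_compl_iff, Set.mem_iUnion, exists_prop, not_exists, not_and] at hω ⊢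
      refine ⟨(G₃ ω, G₂ ω, R ω), ?_, hmemE ω⟩
      rw [Finset.mem_sdiff]
      exact ⟨hmemI ω, fun hmem => hω _ hmem (hmemE ω)⟩
    have h1 : (1 : ℝ≥0∞) ≤ P (⋃ i ∈ s, E i) + ∑ i ∈ I \ s, P (E i) := by
      calc (1 : ℝ≥0∞) = P Set.univ := measure_univ.symm
        _ = P ((⋃ i ∈ s, E i) ∪ (⋃ i ∈ s, E i)ᶜ) := by rw [Set.union_compl_self]
        _ ≤ P (⋃ i ∈ s, E i) + P ((⋃ i ∈ s, E i)ᶜ) := measure_union_le _ _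
        _ ≤ _ := add_le_add_right
            ((measure_mono hcover).trans (measure_biUnion_finset_le _ _)) _
    refine ENNReal.le_of_add_le_add_right hT' ?_
    calc ∑ i ∈ s, P (E i) + ∑ i ∈ I \ s, P (E i) = 1 := by rw [add_comm]; exact hsum
      _ ≤ _ := h1
  constructor
  · -- part 1: the law of G₃
    intro A
    have han : A.card ≤ n := hn ▸ A.card_le_univ
    have hnA : (0 : ℝ) < (n.choose A.card : ℝ) := by exact_mod_cast Nat.choose_pos han
    set sA : Finset (Finset α × Finset α × ℕ) :=
      (Finset.univ ×ˢ Finset.range (n + 1)).image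
        (fun p : Finset α × ℕ => (A, p.1, p.2)) with hsA
    have hsub : sA ⊆ I := by
      intro i hi
      rw [hsA, Finset.mem_image] at hi
      obtain ⟨p, hp, rfl⟩ := hi
      rw [Finset.mem_product] at hp
      rw [hI]
      simp only [Finset.mem_product, Finset.mem_univ, true_and]
      exact hp.2
    have hset : {ω | G₃ ω = A} = ⋃ i ∈ sA, E i := by
      ext ω
      simp only [Set.mem_setOf_eq, Set.mem_iUnion, exists_prop]
      constructor
      · intro h
        refine ⟨(A, G₂ ω, R ω), ?_, ?_⟩
        · rw [hsA, Finset.mem_image]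
          exact ⟨(G₂ ω, R ω), by
            simp [Finset.mem_product, Nat.lt_succ_iff, hRle ω], rfl⟩
        · exact ⟨⟨h, rfl⟩, rfl⟩
      · rintro ⟨i, hi, hωi⟩
        rw [hsA, Finset.mem_image] at hi
        obtain ⟨p, _, rfl⟩ := hi
        exact hωi.1.1
    rw [hset, hpart sA hsub, hsA, Finset.sum_image
      (fun p _ p' _ h => by simpa [Prod.ext_iff] using h), Finset.sum_product]
    have hrad : ∀ B : Finset α, ∑ r ∈ Finset.range (n + 1), P (E (A, B, r))
        = P (E (A, B, A.card)) := by
      intro B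
      apply Finset.sum_eq_single_of_mem A.card (Finset.mem_range.mpr (Nat.lt_succ_of_le han))
      intro r _ hr
      have hempty : E (A, B, r) = ∅ := by
        rw [hE]
        ext ω
        simp only [Set.mem_inter_iff, Set.mem_setOf_eq, Set.mem_empty_iff_false, iff_false,
          not_and]
        rintro ⟨h3, -⟩ hrω
        exact hr (by rw [← hrω, ← hcard ω, h3])
      rw [hempty, measure_empty]
    rw [Finset.sum_congr rfl fun B _ => hrad B]
    have hval : ∀ B : Finset α, P (E (A, B, A.card)) = ENNReal.ofReal
        (if M ≤ (B.card : ℝ) ∧ (A.card : ℝ) ≤ M then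
          (if A ⊆ B then g B.card * q A.card / (B.card.choose A.card) else 0)
        else g B.card * q A.card / (n.choose A.card)) := by
      intro B
      by_cases hgd : M ≤ (B.card : ℝ) ∧ (A.card : ℝ) ≤ M
      · rw [if_pos hgd, hPE, hgood B A.card A hgd.1 hgd.2]
        by_cases hAB : A ⊆ B
        · rw [if_pos ⟨hAB, rfl⟩, if_pos hAB, hQ]
          have hba : (0 : ℝ) < (B.card.choose A.card : ℝ) := by
            exact_mod_cast Nat.choose_pos (Finset.card_le_card hAB)
          rw [ENNReal.ofReal_div_of_pos hba, ENNReal.ofReal_natCast]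
        · rw [if_neg (fun hc => hAB hc.1), if_neg hAB, ENNReal.ofReal_zero]
      · rw [if_neg hgd, hPE, hbad B A.card A hgd, if_pos rfl, hQ,
          ENNReal.ofReal_div_of_pos hnA, ENNReal.ofReal_natCast]
    rw [Finset.sum_congr rfl fun B _ => hval B, ← ENNReal.ofReal_sum_of_nonneg]
    · rw [stmt12_main_real_sum hn g hsumg (q A.card) M A]
      congr 1
      rw [hqdef]
      dsimp only
      field_simp
    · intro B _
      split
      · split
        · exact div_nonneg (mul_nonneg (hg0 _) (hq0 _)) (Nat.cast_nonneg _)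
        · exact le_rfl
      · exact div_nonneg (mul_nonneg (hg0 _) (hq0 _)) (Nat.cast_nonneg _)
  · -- part 2: the coupling inequality
    set J : Finset (Finset α × Finset α × ℕ) :=
      I.filter (fun i => M ≤ (i.2.1.card : ℝ) ∧ (i.2.2 : ℝ) ≤ M ∧ ¬ i.1 ⊆ i.2.1) with hJ
    have hzero : ∑ i ∈ J, P (E i) = 0 := by
      refine Finset.sum_eq_zero fun i hi => ?_
      rw [hJ, Finset.mem_filter] at hi
      obtain ⟨-, h1, h2, h3⟩ := hi
      have := hgood i.2.1 i.2.2 i.1 h1 h2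
      rw [if_neg (fun hc => h3 hc.1)] at this
      calc P (E i) = P ({ω | G₃ ω = i.1} ∩ {ω | G₂ ω = i.2.1} ∩ {ω | R ω = i.2.2}) := rfl
        _ = 0 := this
    have hsub : {ω | M ≤ ((G₂ ω).card : ℝ) ∧ (R ω : ℝ) ≤ M}
        ⊆ {ω | G₃ ω ⊆ G₂ ω} ∪ ⋃ i ∈ J, E i := by
      intro ω hω
      by_cases hss : G₃ ω ⊆ G₂ ω
      · exact Or.inl hss
      · refine Or.inr ?_
        simp only [Set.mem_iUnion, exists_prop]
        refine ⟨(G₃ ω, G₂ ω, R ω), ?_, hmemE ω⟩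
        rw [hJ, Finset.mem_filter]
        exact ⟨hmemI ω, hω.1, hω.2, hss⟩
    calc P {ω | M ≤ ((G₂ ω).card : ℝ) ∧ (R ω : ℝ) ≤ M}
        ≤ P ({ω | G₃ ω ⊆ G₂ ω} ∪ ⋃ i ∈ J, E i) := measure_mono hsub
      _ ≤ P {ω | G₃ ω ⊆ G₂ ω} + P (⋃ i ∈ J, E i) := measure_union_le _ _
      _ ≤ P {ω | G₃ ω ⊆ G₂ ω} + ∑ i ∈ J, P (E i) :=
          add_le_add_right (measure_biUnion_finset_le _ _) _
      _ = P {ω | G₃ ω ⊆ G₂ ω} := by rw [hzero, add_zero]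
end

section
/- If the unit cube is (n,u)-good in the k-fractal percolation process, then percolation occurs in D_k^n: there exists an edge-connected chain of retained level-n cubes joining the face {0}×[0,1]^{d-1} to the face {1}×[0,1]^{d-1}. -/
/-- Adjacency of the lattice `𝕃^d`: `x ~ y` iff `x ≠ y`, `|x_i - y_i| ≤ 1` for all `i`
and `x_i = y_i` for some `i` (equivalently, for `d ≥ 2`, the corresponding cubes share at
least an edge). -/
def latAdj {d : ℕ} (x y : Fin d → ℤ) : Prop :=
  x ≠ y ∧ (∀ i, |x i - y i| ≤ 1) ∧ ∃ i, x i = y i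

/-- The lattice vertex of `{0,…,N^m-1}^d` corresponding to the level-`m` cube with digit
word `I`. -/
def vert (N : ℕ) {d m : ℕ} (I : Fin m → Fin d → Fin N) : Fin d → ℤ :=
  fun i => ∑ j : Fin m, (I j i : ℤ) * (N : ℤ) ^ (m - 1 - (j : ℕ))

/-- The corner `c(I)` of the level-`m` cube with digit word `I`. -/
noncomputable def corner (N : ℕ) {d m : ℕ} (I : Fin m → Fin d → Fin N) : Fin d → ℝ :=
  fun i => ∑ j : Fin m, (I j i : ℝ) / (N : ℝ) ^ ((j : ℕ) + 1)

/-- The level-`m` cube `C(I) = c(I) + [0, N^{-m}]^d`. -/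
def cube (N : ℕ) {d m : ℕ} (I : Fin m → Fin d → Fin N) : Set (Fin d → ℝ) :=
  {x | ∀ i, corner N I i ≤ x i ∧ x i ≤ corner N I i + 1 / (N : ℝ) ^ m}

/-- `L` is an edge (1-dimensional face) of the cube with corner `q` and side length `s`. -/
def isEdgeOf {d : ℕ} (q : Fin d → ℝ) (s : ℝ) (L : Set (Fin d → ℝ)) : Prop :=
  ∃ (r : Fin d) (a : Fin d → Bool),
    L = {x | q r ≤ x r ∧ x r ≤ q r + s ∧ ∀ i, i ≠ r → x i = q i + (if a i then s else 0)}

/-- Corner of a child cube. -/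
lemma corner_snoc (N : ℕ) {d m : ℕ} (I : Fin m → Fin d → Fin N) (j : Fin d → Fin N)
    (i : Fin d) :
    corner N (Fin.snoc I j) i = corner N I i + (j i : ℝ) / (N : ℝ) ^ (m + 1) := by
  unfold corner
  rw [Fin.sum_univ_castSucc]
  simp

/-- All elements of a chain satisfy any predicate implied by the right side of the
relation. -/
lemma chain_mem {α : Type*} {P : α → Prop} {r : α → α → Prop} (hr : ∀ x y, r x y → P y) :
    ∀ {a : α} {l : List α}, List.Chain r a l → ∀ x ∈ l, P x := by
  intro a l h
  induction l generalizing a with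
  | nil => simp
  | cons b l ih =>
    intro x hx
    have h' := List.isChain_cons_cons.mp h
    rcases List.mem_cons.mp hx with rfl | hx
    · exact hr _ _ h'.1
    · exact ih h'.2 x hx

/-- Lemma 10 of the paper: if the unit cube is `(n,u)`-good, then percolation occurs in
`D_k^n`, i.e. there is an edge-connected chain of retained level-`n` cubes joining the face
`{x₀ = 0}` of `[0,1]^d` to the face `{x₀ = 1}`. Here `Z m I` is the (cumulative) retention
indicator of the cube `C(I)`, `good` is the goodness predicate and `H m I ⊆ J^d` is the
edge-connected witness set of retained good children of a good cube `C(I)`, satisfying: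
(i) every edge of `C(I)` meets at least `u` cubes of `H(I)`; (ii) for any two good
edge-adjacent level-`m` cubes, some cube of `H(I)` shares an edge with some cube of
`H(I')`; and every level-`n` cube is good. -/
theorem stmt13 (N d n u : ℕ) (hN : 2 ≤ N) (hd : 2 ≤ d) (hu : 1 ≤ u)
    (Z : (m : ℕ) → (Fin m → Fin d → Fin N) → Prop)
    (good : (m : ℕ) → (Fin m → Fin d → Fin N) → Prop)
    (H : (m : ℕ) → (Fin m → Fin d → Fin N) → Finset (Fin d → Fin N))
    (hlevel : ∀ I : Fin n → Fin d → Fin N, good n I)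
    (hHmem : ∀ m, m < n → ∀ I : Fin m → Fin d → Fin N, good m I →
      ∀ j ∈ H m I, good (m + 1) (Fin.snoc I j) ∧ Z (m + 1) (Fin.snoc I j))
    (hHconn : ∀ m, m < n → ∀ I : Fin m → Fin d → Fin N, good m I →
      ∀ a ∈ H m I, ∀ b ∈ H m I,
        Relation.ReflTransGen
          (fun x y => x ∈ H m I ∧ y ∈ H m I ∧
            latAdj (vert N (Fin.snoc I x)) (vert N (Fin.snoc I y))) a b)
    (hedges : ∀ m, m < n → ∀ I : Fin m → Fin d → Fin N, good m I →
      ∀ L : Set (Fin d → ℝ), isEdgeOf (corner N I) (1 / (N : ℝ) ^ m) L →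
        u ≤ Set.ncard {j | j ∈ H m I ∧ (cube N (Fin.snoc I j) ∩ L).Nonempty})
    (hlink : ∀ m, m < n → ∀ I I' : Fin m → Fin d → Fin N,
      good m I → good m I' → latAdj (vert N I) (vert N I') →
      ∃ j ∈ H m I, ∃ j' ∈ H m I',
        latAdj (vert N (Fin.snoc I j)) (vert N (Fin.snoc I' j')))
    (hZroot : Z 0 Fin.elim0)
    (hgood0 : good 0 Fin.elim0) :
    ∃ (l : ℕ) (w : Fin (l + 1) → Fin n → Fin d → Fin N),
      (∀ t, Z n (w t)) ∧
      (∀ t : Fin l, latAdj (vert N (w t.castSucc)) (vert N (w t.succ))) ∧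
      (∀ j : Fin n, (w 0 j ⟨0, by omega⟩ : ℕ) = 0) ∧
      (∀ j : Fin n, (w (Fin.last l) j ⟨0, by omega⟩ : ℕ) = N - 1) := by
  have hN0 : (0 : ℝ) < (N : ℝ) := by exact_mod_cast (by omega : 0 < N)
  have i0 : Fin d := ⟨0, by omega⟩
  -- existence of a child of a good cube touching the lower x₀-face
  have child_lo : ∀ m, m < n → ∀ I : Fin m → Fin d → Fin N, good m I →
      ∃ j ∈ H m I, (j ⟨0, by omega⟩ : ℕ) = 0 := by
    intro m hm I hI
    set r : Fin d := ⟨1, by omega⟩ with hr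
    set L : Set (Fin d → ℝ) :=
      {x | corner N I r ≤ x r ∧ x r ≤ corner N I r + 1 / (N : ℝ) ^ m ∧
        ∀ i, i ≠ r → x i = corner N I i + (if (fun _ => false : Fin d → Bool) i
          then 1 / (N : ℝ) ^ m else 0)} with hLdef
    have hL : isEdgeOf (corner N I) (1 / (N : ℝ) ^ m) L := ⟨r, fun _ => false, rfl⟩
    have hcard := hedges m hm I hI L hL
    have hne : {j | j ∈ H m I ∧ (cube N (Fin.snoc I j) ∩ L).Nonempty}.Nonempty := by
      by_contra h
      rw [Set.not_nonempty_iff_eq_empty] at h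
      rw [h, Set.ncard_empty] at hcard
      omega
    obtain ⟨j, hjH, x, hxc, hxL⟩ := hne
    refine ⟨j, hjH, ?_⟩
    have h1 := (hxc ⟨0, by omega⟩).1
    have h2 : x ⟨0, by omega⟩ = corner N I ⟨0, by omega⟩ := by
      have := hxL.2.2 ⟨0, by omega⟩ (by simp [hr, Fin.ext_iff])
      simpa using this
    rw [corner_snoc, h2] at h1
    have hp : (0 : ℝ) < (N : ℝ) ^ (m + 1) := by positivity
    have hnn : (0 : ℝ) ≤ (j ⟨0, by omega⟩ : ℕ) := Nat.cast_nonneg _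
    have : ((j ⟨0, by omega⟩ : ℕ) : ℝ) ≤ 0 := by
      by_contra hc
      push_neg at hc
      have := div_pos hc hp
      linarith
    exact_mod_cast le_antisymm this hnn
  -- existence of a child of a good cube touching the upper x₀-face
  have child_hi : ∀ m, m < n → ∀ I : Fin m → Fin d → Fin N, good m I →
      ∃ j ∈ H m I, (j ⟨0, by omega⟩ : ℕ) = N - 1 := by
    intro m hm I hI
    set r : Fin d := ⟨1, by omega⟩ with hr
    set L : Set (Fin d → ℝ) :=
      {x | corner N I r ≤ x r ∧ x r ≤ corner N I r + 1 / (N : ℝ) ^ m ∧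
        ∀ i, i ≠ r → x i = corner N I i + (if (fun _ => true : Fin d → Bool) i
          then 1 / (N : ℝ) ^ m else 0)} with hLdef
    have hL : isEdgeOf (corner N I) (1 / (N : ℝ) ^ m) L := ⟨r, fun _ => true, rfl⟩
    have hcard := hedges m hm I hI L hL
    have hne : {j | j ∈ H m I ∧ (cube N (Fin.snoc I j) ∩ L).Nonempty}.Nonempty := by
      by_contra h
      rw [Set.not_nonempty_iff_eq_empty] at h
      rw [h, Set.ncard_empty] at hcard
      omega
    obtain ⟨j, hjH, x, hxc, hxL⟩ := hne
    refine ⟨j, hjH, ?_⟩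
    have h1 := (hxc ⟨0, by omega⟩).2
    have h2 : x ⟨0, by omega⟩ = corner N I ⟨0, by omega⟩ + 1 / (N : ℝ) ^ m := by
      have := hxL.2.2 ⟨0, by omega⟩ (by simp [hr, Fin.ext_iff])
      simpa using this
    rw [corner_snoc, h2] at h1
    -- 1/N^m ≤ (j+1)/N^(m+1), hence N ≤ j+1
    have hp : (0 : ℝ) < (N : ℝ) ^ m := by positivity
    have hkey : (N : ℝ) ≤ ((j ⟨0, by omega⟩ : ℕ) : ℝ) + 1 := by
      have h3 : 1 / (N : ℝ) ^ m ≤ (((j ⟨0, by omega⟩ : ℕ) : ℝ) + 1) / (N : ℝ) ^ (m + 1) := by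
        rw [add_div]
        linarith
      rw [div_le_div_iff₀ hp (by positivity)] at h3
      rw [pow_succ] at h3
      nlinarith
    have hlt : (j ⟨0, by omega⟩ : ℕ) < N := (j ⟨0, by omega⟩).isLt
    have : N ≤ (j ⟨0, by omega⟩ : ℕ) + 1 := by exact_mod_cast hkey
    omega
  -- path inside H m I between any two of its members
  have within : ∀ m, m < n → ∀ I : Fin m → Fin d → Fin N, good m I →
      ∀ a ∈ H m I, ∀ b ∈ H m I, ∃ p : List (Fin d → Fin N), p ≠ [] ∧
        (∀ x ∈ p, x ∈ H m I) ∧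
        List.Chain' (fun x y =>
          latAdj (vert N (Fin.snoc I x)) (vert N (Fin.snoc I y))) p ∧
        p.head? = some a ∧ p.getLast? = some b := by
    intro m hm I hI a ha b hb
    obtain ⟨l, hchain, hlast⟩ :=
      List.exists_isChain_cons_of_relationReflTransGen (hHconn m hm I hI a ha b hb)
    refine ⟨a :: l, List.cons_ne_nil _ _, ?_, ?_, rfl, ?_⟩
    · intro x hx
      rcases List.mem_cons.mp hx with rfl | hx
      · exact ha
      · exact chain_mem (fun x y h => h.2.1) hchain x hx
    · exact List.Chain.imp (fun x y h => h.2.2) hchain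
    · rw [List.getLast?_eq_getLast (List.cons_ne_nil _ _), hlast]
  -- building a child chain along a parent chain
  have build : ∀ m, m < n → ∀ c : List (Fin m → Fin d → Fin N), ∀ hne : c ≠ [],
      (∀ I ∈ c, good m I) →
      List.Chain' (fun I I' => latAdj (vert N I) (vert N I')) c →
      ∀ a ∈ H m (c.head hne), ∀ e ∈ H m (c.getLast hne),
      ∃ p : List (Fin (m + 1) → Fin d → Fin N), p ≠ [] ∧
        (∀ J ∈ p, ∃ I ∈ c, ∃ j ∈ H m I, J = Fin.snoc I j) ∧
        List.Chain' (fun J J' => latAdj (vert N J) (vert N J')) p ∧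
        p.head? = some (Fin.snoc (c.head hne) a) ∧
        p.getLast? = some (Fin.snoc (c.getLast hne) e) := by
    intro m hm c
    induction c with
    | nil => intro h; exact absurd rfl h
    | cons I rest ih =>
      intro hne hgood hchain a ha e he
      cases rest with
      | nil =>
        simp only [List.head_cons, List.getLast_singleton] at ha he ⊢
        obtain ⟨p, hp0, hpmem, hpch, hph, hpl⟩ :=
          within m hm I (hgood I (by simp)) a ha e he
        refine ⟨p.map (Fin.snoc I), by simpa using hp0, ?_, ?_, ?_, ?_⟩
        · intro J hJ
          obtain ⟨x, hx, rfl⟩ := List.mem_map.mp hJ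
          exact ⟨I, by simp, x, hpmem x hx, rfl⟩
        · exact (List.isChain_map _).mpr hpch
        · rw [List.head?_map, hph]; rfl
        · rw [List.getLast?_map, hpl]; rfl
      | cons I' rest' =>
        have hadj : latAdj (vert N I) (vert N I') := (List.isChain_cons_cons.mp hchain).1
        obtain ⟨j, hj, j', hj', hjj'⟩ := hlink m hm I I'
          (hgood I (by simp)) (hgood I' (by simp)) hadj
        obtain ⟨p1, hp10, hp1mem, hp1ch, hp1h, hp1l⟩ :=
          within m hm I (hgood I (by simp)) a (by simpa using ha) j hj
        have hLast : (I :: I' :: rest').getLast hne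
            = (I' :: rest').getLast (List.cons_ne_nil _ _) :=
          List.getLast_cons _
        obtain ⟨p2, hp20, hp2mem, hp2ch, hp2h, hp2l⟩ :=
          ih (List.cons_ne_nil _ _) (fun I₀ hI₀ => hgood I₀ (by simp [hI₀]))
            (List.isChain_cons_cons.mp hchain).2 j' hj' e (by rwa [← hLast])
        refine ⟨p1.map (Fin.snoc I) ++ p2, by simp [hp20], ?_, ?_, ?_, ?_⟩
        · intro J hJ
          rcases List.mem_append.mp hJ with hJ | hJ
          · obtain ⟨x, hx, rfl⟩ := List.mem_map.mp hJ
            exact ⟨I, by simp, x, hp1mem x hx, rfl⟩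
          · obtain ⟨I₀, hI₀, j₀, hj₀, rfl⟩ := hp2mem J hJ
            exact ⟨I₀, by simp [hI₀], j₀, hj₀, rfl⟩
        · refine List.IsChain.append ((List.isChain_map _).mpr hp1ch) hp2ch ?_
          intro x hx y hy
          simp only [List.getLast?_map, hp1l, Option.map_some, Option.mem_def,
            Option.some.injEq] at hx
          simp only [hp2h, Option.mem_def, Option.some.injEq] at hy
          rw [← hx, ← hy]
          exact hjj'
        · rw [List.head?_append_of_ne_nil _ (by simpa using hp10), List.head?_map, hp1h]
          rfl
        · rw [List.getLast?_append_of_ne_nil _ hp20, hp2l, hLast]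
  -- main induction over levels
  have main : ∀ m, m ≤ n → ∃ c : List (Fin m → Fin d → Fin N), ∃ hne : c ≠ [],
      (∀ I ∈ c, good m I ∧ Z m I) ∧
      List.Chain' (fun I I' => latAdj (vert N I) (vert N I')) c ∧
      (∀ j : Fin m, ((c.head hne) j ⟨0, by omega⟩ : ℕ) = 0) ∧
      (∀ j : Fin m, ((c.getLast hne) j ⟨0, by omega⟩ : ℕ) = N - 1) := by
    intro m
    induction m with
    | zero =>
      intro _
      refine ⟨[Fin.elim0], List.cons_ne_nil _ _, ?_, List.isChain_singleton _,
        fun j => j.elim0, fun j => j.elim0⟩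
      intro I hI
      rw [List.mem_singleton] at hI
      subst hI
      exact ⟨hgood0, hZroot⟩
    | succ m ih =>
      intro hm1
      have hm : m < n := hm1
      obtain ⟨c, hne, hgz, hch, hhead, hlast⟩ := ih (le_of_lt hm)
      obtain ⟨a, ha, ha0⟩ := child_lo m hm (c.head hne) (hgz _ (List.head_mem hne)).1
      obtain ⟨e, he, he0⟩ := child_hi m hm (c.getLast hne) (hgz _ (List.getLast_mem hne)).1
      obtain ⟨p, hp0, hpmem, hpch, hph, hpl⟩ :=
        build m hm c hne (fun I hI => (hgz I hI).1) hch a ha e he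
      refine ⟨p, hp0, ?_, hpch, ?_, ?_⟩
      · intro J hJ
        obtain ⟨I, hI, j, hj, rfl⟩ := hpmem J hJ
        exact hHmem m hm I (hgz I hI).1 j hj
      · have hh : p.head hp0 = Fin.snoc (c.head hne) a := by
          have := List.head?_eq_head hp0
          rw [hph] at this
          exact (Option.some_inj.mp this).symm
        rw [hh]
        intro j
        refine Fin.lastCases ?_ ?_ j
        · simpa using ha0
        · intro i
          simpa using hhead i
      · have hh : p.getLast hp0 = Fin.snoc (c.getLast hne) e := by
          have := List.getLast?_eq_some_getLast hp0
          rw [hpl] at this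
          exact Option.some_inj.mp this.symm
        rw [hh]
        intro j
        refine Fin.lastCases ?_ ?_ j
        · simpa using he0
        · intro i
          simpa using hlast i
  -- conversion of the level-n list chain to the required indexed form
  obtain ⟨c, hne, hgz, hch, hhead, hlast⟩ := main n le_rfl
  have hlen : c.length - 1 + 1 = c.length := Nat.succ_pred_eq_of_pos (List.length_pos_iff.mpr hne)
  refine ⟨c.length - 1, fun t => c.get (Fin.cast hlen t), ?_, ?_, ?_, ?_⟩
  · intro t
    exact (hgz _ (List.get_mem c _)).2
  · intro t
    have ht : (t : ℕ) < c.length - 1 := t.isLt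
    have := List.isChain_iff_getElem.mp hch t (by omega)
    convert this using 2 <;> simp
  · intro j
    have h0 : c.get (Fin.cast hlen 0) = c.head hne := by
      rw [show (Fin.cast hlen 0 : Fin c.length) = ⟨0, List.length_pos_iff.mpr hne⟩ from
        Fin.ext (by simp)]
      exact List.get_mk_zero _
    show (c.get (Fin.cast hlen 0) j ⟨0, by omega⟩ : ℕ) = 0
    rw [h0]
    exact hhead j
  · intro j
    have h1 : c.get (Fin.cast hlen (Fin.last (c.length - 1))) = c.getLast hne := by
      rw [List.getLast_eq_getElem, List.get_eq_getElem]
      congr 1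
    show (c.get (Fin.cast hlen (Fin.last (c.length - 1))) j ⟨0, by omega⟩ : ℕ) = N - 1
    rw [h1]
    exact hlast j
end

section
/- In fat fractal percolation on [0,1]^d, if P(C(i_1,…,i_n) ⊆ D_fat) > 0 for some level-n cube, then by translation invariance and the FKG inequality P(D_fat = [0,1]^d) > 0; since P(D_fat = [0,1]^d) = ∏_{n=1}^∞ p_n^{N^{dn}}, it follows that if ∏_{n=1}^∞ p_n^{N^{dn}} = 0 then D_fat has empty interior almost surely. -/
open MeasureTheory

/-- A configuration of fat fractal percolation: a retention decision for every level-`m`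
cube, each cube being encoded by its digit word `I : Fin m → Fin d → Fin N`. -/
abbrev Config (N d : ℕ) := (m : ℕ) → (Fin m → Fin d → Fin N) → Bool

/-- A cube is (cumulatively) retained if it and all its ancestors are retained. -/
def retained (N d : ℕ) (ω : Config N d) {m : ℕ} (I : Fin m → Fin d → Fin N) : Prop :=
  ∀ l, ∀ h : l ≤ m, ω l (fun j => I (Fin.castLE h j)) = true

/-- The limit set `D_fat = ⋂_m ⋃ {C(I) : I retained at level m}`. -/
def limitSet (N d : ℕ) (ω : Config N d) : Set (Fin d → ℝ) :=
  ⋂ m : ℕ, ⋃ I ∈ {I : Fin m → Fin d → Fin N | retained N d ω I}, cube N I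


open scoped ENNReal NNReal

namespace FFPaux

variable {N : ℕ}

variable {N : ℕ}

/-- base-`N` value of a digit word -/
def vval (N : ℕ) {m : ℕ} (a : Fin m → Fin N) : ℕ :=
  ∑ j, (a j : ℕ) * N ^ (m - 1 - (j : ℕ))

lemma vval_succ {m : ℕ} (a : Fin (m + 1) → Fin N) :
    vval N a = (a 0 : ℕ) * N ^ m + vval N (fun j => a j.succ) := by
  unfold vval
  rw [Fin.sum_univ_succ]
  congr 1
  refine Finset.sum_congr rfl fun j _ => ?_
  congr 2
  simp only [Fin.val_succ]
  omega

lemma vval_lt {m : ℕ} (a : Fin m → Fin N) : vval N a < N ^ m := by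
  induction m with
  | zero => simp [vval]
  | succ m ih =>
    rw [vval_succ, pow_succ]
    have h1 := ih (fun j => a j.succ)
    have h2 : (a 0 : ℕ) + 1 ≤ N := (a 0).isLt
    calc (a 0 : ℕ) * N ^ m + vval N (fun j => a j.succ)
        < ((a 0 : ℕ) + 1) * N ^ m := by rw [add_mul, one_mul]; omega
      _ ≤ N * N ^ m := Nat.mul_le_mul_right _ h2
      _ = N ^ m * N := Nat.mul_comm _ _

lemma vval_inj {m : ℕ} {a b : Fin m → Fin N} (h : vval N a = vval N b) : a = b := by
  induction m with
  | zero => funext j; exact j.elim0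
  | succ m ih =>
    rw [vval_succ, vval_succ] at h
    have la := vval_lt (N := N) (fun j => a j.succ)
    have lb := vval_lt (N := N) (fun j => b j.succ)
    have h0 : (a 0 : ℕ) = (b 0 : ℕ) := by
      by_contra hne
      rcases Nat.lt_or_ge (a 0 : ℕ) (b 0 : ℕ) with hlt | hge
      · have hx : (a 0 : ℕ) * N ^ m + vval N (fun j => a j.succ) < (b 0 : ℕ) * N ^ m := by
          calc (a 0 : ℕ) * N ^ m + vval N (fun j => a j.succ)
              < ((a 0 : ℕ) + 1) * N ^ m := by rw [add_mul, one_mul]; omega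
            _ ≤ (b 0 : ℕ) * N ^ m := Nat.mul_le_mul_right _ hlt
        omega
      · have hlt' : (b 0 : ℕ) < (a 0 : ℕ) := by omega
        have hx : (b 0 : ℕ) * N ^ m + vval N (fun j => b j.succ) < (a 0 : ℕ) * N ^ m := by
          calc (b 0 : ℕ) * N ^ m + vval N (fun j => b j.succ)
              < ((b 0 : ℕ) + 1) * N ^ m := by rw [add_mul, one_mul]; omega
            _ ≤ (a 0 : ℕ) * N ^ m := Nat.mul_le_mul_right _ hlt'
        omega
    have htail : (fun j : Fin m => a j.succ) = (fun j : Fin m => b j.succ) := by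
      apply ih
      rw [h0] at h
      omega
    funext j
    cases j using Fin.cases with
    | zero => exact Fin.ext h0
    | succ j => exact congrFun htail j

lemma vval_surj {m : ℕ} (hN : 0 < N) : ∀ k, k < N ^ m → ∃ a : Fin m → Fin N, vval N a = k := by
  induction m with
  | zero =>
    intro k hk
    refine ⟨fun j => j.elim0, ?_⟩
    simp only [pow_zero, Nat.lt_one_iff] at hk
    simp [vval, hk]
  | succ m ih =>
    intro k hk
    have hNm : 0 < N ^ m := pow_pos hN m
    have hq : k / N ^ m < N := by
      rw [Nat.div_lt_iff_lt_mul hNm]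
      calc k < N ^ (m + 1) := hk
        _ = N * N ^ m := by rw [pow_succ, Nat.mul_comm]
    obtain ⟨t, ht⟩ := ih (k % N ^ m) (Nat.mod_lt _ hNm)
    refine ⟨Fin.cons (α := fun _ => Fin N) ⟨k / N ^ m, hq⟩ t, ?_⟩
    rw [vval_succ]
    have h1 : (fun j : Fin m => Fin.cons (α := fun _ => Fin N) ⟨k / N ^ m, hq⟩ t j.succ) = t := by
      funext j; simp
    rw [h1, ht]
    show (k / N ^ m) * N ^ m + k % N ^ m = k
    rw [Nat.mul_comm]
    have := Nat.div_add_mod k (N ^ m)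
    omega

/-- 1-dimensional corner value -/
noncomputable def c1 (N : ℕ) {m : ℕ} (a : Fin m → Fin N) : ℝ :=
  ∑ j, (a j : ℝ) / (N : ℝ) ^ ((j : ℕ) + 1)

lemma c1_succ {m : ℕ} (a : Fin (m + 1) → Fin N) :
    c1 N a = (a 0 : ℝ) / N + c1 N (fun j => a j.succ) / N := by
  unfold c1
  rw [Fin.sum_univ_succ, Finset.sum_div]
  congr 1
  · norm_num
  · refine Finset.sum_congr rfl fun j _ => ?_
    rw [div_div, ← pow_succ]
    simp only [Fin.val_succ]

lemma c1_eq_vval (hN : 0 < N) {m : ℕ} (a : Fin m → Fin N) :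
    c1 N a = (vval N a : ℝ) / (N : ℝ) ^ m := by
  have hNR : (N : ℝ) ≠ 0 := Nat.cast_ne_zero.mpr hN.ne'
  induction m with
  | zero => simp [c1, vval]
  | succ m ih =>
    rw [c1_succ, ih (fun j => a j.succ)]
    show _ = ((vval N a : ℕ) : ℝ) / _
    rw [vval_succ]
    have hNRm : ((N : ℝ)) ^ m ≠ 0 := pow_ne_zero _ hNR
    push_cast
    field_simp
    ring

lemma c1_sep (hN : 0 < N) {m : ℕ} {a b : Fin m → Fin N} (hab : a ≠ b) :
    c1 N a + 1 / (N : ℝ) ^ m ≤ c1 N b ∨ c1 N b + 1 / (N : ℝ) ^ m ≤ c1 N a := by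
  have hv : vval N a ≠ vval N b := fun h => hab (vval_inj h)
  have hpos : (0 : ℝ) < (N : ℝ) ^ m := by positivity
  rcases Nat.lt_or_ge (vval N a) (vval N b) with h | h
  · left
    rw [c1_eq_vval hN, c1_eq_vval hN, ← add_div]
    gcongr
    have : vval N a + 1 ≤ vval N b := h
    exact_mod_cast this
  · right
    have h' : vval N b < vval N a := by omega
    rw [c1_eq_vval hN, c1_eq_vval hN, ← add_div]
    gcongr
    have : vval N b + 1 ≤ vval N a := h'
    exact_mod_cast this


variable {N d : ℕ}

lemma corner_eq_c1 {m : ℕ} (I : Fin m → Fin d → Fin N) (i : Fin d) :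
    corner N I i = c1 N (fun j => I j i) := rfl

lemma corner_last {l : ℕ} (J : Fin (l + 1) → Fin d → Fin N) (i : Fin d) :
    corner N J i = corner N (fun j : Fin l => J j.castSucc) i
      + (J (Fin.last l) i : ℝ) / (N : ℝ) ^ (l + 1) := by
  unfold corner
  rw [Fin.sum_univ_castSucc]
  simp

lemma corner_prefix_bounds (hN : 0 < N) {m l : ℕ} (h : m ≤ l)
    (I : Fin m → Fin d → Fin N) (J : Fin l → Fin d → Fin N)
    (hJ : ∀ j : Fin m, J (Fin.castLE h j) = I j) (i : Fin d) :
    corner N I i ≤ corner N J i ∧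
      corner N J i + 1 / (N : ℝ) ^ l ≤ corner N I i + 1 / (N : ℝ) ^ m := by
  have hNR : (0 : ℝ) < (N : ℝ) := by exact_mod_cast hN
  induction l, h using Nat.le_induction with
  | base =>
    have hJI : J = I := funext fun j => by rw [← hJ j]; rfl
    rw [hJI]
    exact ⟨le_rfl, le_rfl⟩
  | succ l hml ih =>
    set K : Fin l → Fin d → Fin N := fun j => J j.castSucc with hK
    have hKpre : ∀ j : Fin m, K (Fin.castLE hml j) = I j := by
      intro j
      rw [← hJ j]
      rfl
    obtain ⟨h1, h2⟩ := ih K hKpre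
    have hdig : (0 : ℝ) ≤ (J (Fin.last l) i : ℝ) ∧ (J (Fin.last l) i : ℝ) ≤ (N : ℝ) - 1 := by
      constructor
      · positivity
      · have hlt : ((J (Fin.last l) i : ℕ) : ℝ) + 1 ≤ (N : ℝ) := by
          exact_mod_cast (J (Fin.last l) i).isLt
        linarith
    have hpow : (0 : ℝ) < (N : ℝ) ^ (l + 1) := by positivity
    have haux : ((N : ℝ) - 1) / (N : ℝ) ^ (l + 1) + 1 / (N : ℝ) ^ (l + 1) = 1 / (N : ℝ) ^ l := by
      rw [← add_div, pow_succ]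
      rw [div_eq_div_iff (by positivity) (by positivity)]
      ring
    rw [corner_last J i]
    constructor
    · have : (0 : ℝ) ≤ (J (Fin.last l) i : ℝ) / (N : ℝ) ^ (l + 1) := by positivity
      linarith
    · have hd2 : (J (Fin.last l) i : ℝ) / (N : ℝ) ^ (l + 1) ≤ ((N : ℝ) - 1) / (N : ℝ) ^ (l + 1) := by
        gcongr
        exact hdig.2
      linarith

lemma corner_bounds (hN : 0 < N) {l : ℕ} (J : Fin l → Fin d → Fin N) (i : Fin d) :
    0 ≤ corner N J i ∧ corner N J i + 1 / (N : ℝ) ^ l ≤ 1 := by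
  have h := corner_prefix_bounds hN (Nat.zero_le l) (fun j : Fin 0 => j.elim0) J
    (fun j => j.elim0) i
  have h0 : corner N (fun j : Fin 0 => (j.elim0 : Fin d → Fin N)) i = 0 := by
    simp [corner]
  rw [h0] at h
  simpa using h

lemma cube_subset_Icc (hN : 0 < N) {l : ℕ} (J : Fin l → Fin d → Fin N) :
    cube N J ⊆ Set.Icc (0 : Fin d → ℝ) 1 := by
  intro x hx
  obtain h := corner_bounds hN J
  have hpow : (0 : ℝ) < 1 / (N : ℝ) ^ l := by positivity
  constructor
  · intro i
    exact le_trans (h i).1 (hx i).1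
  · intro i
    have := (hx i).2
    have := (h i).2
    dsimp
    linarith

lemma cube_prefix_subset (hN : 0 < N) {m l : ℕ} (h : m ≤ l)
    (I : Fin m → Fin d → Fin N) (J : Fin l → Fin d → Fin N)
    (hJ : ∀ j : Fin m, J (Fin.castLE h j) = I j) :
    cube N J ⊆ cube N I := by
  intro x hx i
  obtain ⟨h1, h2⟩ := corner_prefix_bounds hN h I J hJ i
  obtain ⟨hx1, hx2⟩ := hx i
  exact ⟨le_trans h1 hx1, by linarith⟩

lemma eq_of_strict_mem (hN : 0 < N) {m : ℕ} {I J : Fin m → Fin d → Fin N} {x : Fin d → ℝ}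
    (hx : ∀ i, corner N I i < x i ∧ x i < corner N I i + 1 / (N : ℝ) ^ m)
    (hxJ : x ∈ cube N J) : J = I := by
  by_contra hne
  have hex : ∃ i, (fun j => J j i) ≠ (fun j => I j i) := by
    by_contra hall
    push_neg at hall
    exact hne (funext fun j => funext fun i => congrFun (hall i) j)
  obtain ⟨i, hi⟩ := hex
  have e1 : corner N J i = c1 N (fun j => J j i) := rfl
  have e2 : corner N I i = c1 N (fun j => I j i) := rfl
  rcases c1_sep hN hi with hc | hc
  · have h1 := (hxJ i).2
    have h2 := (hx i).1
    rw [e1, e2] at *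
    linarith
  · have h1 := (hxJ i).1
    have h2 := (hx i).2
    rw [e1, e2] at *
    linarith

/-- midpoint of a cube -/
noncomputable def midpt (N : ℕ) {d m : ℕ} (I : Fin m → Fin d → Fin N) : Fin d → ℝ :=
  fun i => corner N I i + 1 / (2 * (N : ℝ) ^ m)

lemma midpt_strict (hN : 0 < N) {m : ℕ} (I : Fin m → Fin d → Fin N) (i : Fin d) :
    corner N I i < midpt N I i ∧ midpt N I i < corner N I i + 1 / (N : ℝ) ^ m := by
  have hpow : (0 : ℝ) < (N : ℝ) ^ m := by positivity
  unfold midpt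
  constructor
  · have : (0 : ℝ) < 1 / (2 * (N : ℝ) ^ m) := by positivity
    linarith
  · have : 1 / (2 * (N : ℝ) ^ m) < 1 / (N : ℝ) ^ m := by
      apply div_lt_div_of_pos_left one_pos hpow
      linarith
    linarith

lemma midpt_mem_cube (hN : 0 < N) {m : ℕ} (I : Fin m → Fin d → Fin N) :
    midpt N I ∈ cube N I :=
  fun i => ⟨(midpt_strict hN I i).1.le, (midpt_strict hN I i).2.le⟩

lemma midpt_mem_Icc (hN : 0 < N) {m : ℕ} (I : Fin m → Fin d → Fin N) :
    midpt N I ∈ Set.Icc (0 : Fin d → ℝ) 1 :=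
  cube_subset_Icc hN I (midpt_mem_cube hN I)

lemma exists_cube_mem (hN : 0 < N) (m : ℕ) {d : ℕ} {x : Fin d → ℝ}
    (hx : x ∈ Set.Icc (0 : Fin d → ℝ) 1) : ∃ I : Fin m → Fin d → Fin N, x ∈ cube N I := by
  have hx0 : ∀ i, 0 ≤ x i := fun i => hx.1 i
  have hx1 : ∀ i, x i ≤ 1 := fun i => hx.2 i
  have hNm : 0 < N ^ m := pow_pos hN m
  have hpow : (0 : ℝ) < (N : ℝ) ^ m := by positivity
  set K : Fin d → ℕ := fun i => min ⌊x i * (N : ℝ) ^ m⌋₊ (N ^ m - 1) with hKdef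
  have hKlt : ∀ i, K i < N ^ m := fun i => by
    have : K i ≤ N ^ m - 1 := min_le_right _ _
    omega
  choose a ha using fun i => vval_surj (m := m) hN (K i) (hKlt i)
  refine ⟨fun j i => a i j, fun i => ?_⟩
  have hc : corner N (fun j i => a i j) i = (K i : ℝ) / (N : ℝ) ^ m := by
    have e : corner N (fun j i => a i j) i = c1 N (a i) := rfl
    rw [e, c1_eq_vval hN, ha i]
  have hcast : ((N ^ m : ℕ) : ℝ) = (N : ℝ) ^ m := by push_cast; ring
  constructor
  · rw [hc, div_le_iff₀ hpow]
    calc (K i : ℝ) ≤ (⌊x i * (N : ℝ) ^ m⌋₊ : ℝ) := by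
          exact Nat.cast_le.mpr (min_le_left _ _)
      _ ≤ x i * (N : ℝ) ^ m := Nat.floor_le (mul_nonneg (hx0 i) hpow.le)
  · rw [hc, ← add_div, le_div_iff₀ hpow]
    rcases le_or_gt ⌊x i * (N : ℝ) ^ m⌋₊ (N ^ m - 1) with hle | hgt
    · have hKi : K i = ⌊x i * (N : ℝ) ^ m⌋₊ := min_eq_left hle
      rw [hKi]
      exact (Nat.lt_floor_add_one _).le
    · have hKi : K i = N ^ m - 1 := min_eq_right (by omega)
      rw [hKi]
      have h1 : ((N ^ m - 1 : ℕ) : ℝ) + 1 = (N : ℝ) ^ m := by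
        rw [Nat.cast_sub hNm]
        push_cast
        ring
      rw [h1]
      calc x i * (N : ℝ) ^ m ≤ 1 * (N : ℝ) ^ m := by
            apply mul_le_mul_of_nonneg_right (hx1 i) hpow.le
        _ = (N : ℝ) ^ m := one_mul _


lemma mem_limitSet_iff {ω : Config N d} {x : Fin d → ℝ} :
    x ∈ limitSet N d ω ↔ ∀ m : ℕ, ∃ I : Fin m → Fin d → Fin N,
      retained N d ω I ∧ x ∈ cube N I := by
  simp [limitSet, Set.mem_iInter, Set.mem_iUnion]

lemma flag_of_retained {ω : Config N d} {m : ℕ} {I : Fin m → Fin d → Fin N}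
    (h : retained N d ω I) : ω m I = true := by
  have := h m le_rfl
  have he : (fun j => I (Fin.castLE le_rfl j)) = I := rfl
  rwa [he] at this

lemma limitSet_subset_Icc (hN : 0 < N) (ω : Config N d) :
    limitSet N d ω ⊆ Set.Icc (0 : Fin d → ℝ) 1 := by
  intro x hx
  obtain ⟨I, _, hxI⟩ := mem_limitSet_iff.mp hx 0
  exact cube_subset_Icc hN I hxI

/-- characterization of the full-retention event -/
lemma limitSet_eq_Icc_iff (hN : 0 < N) (ω : Config N d) :
    limitSet N d ω = Set.Icc (0 : Fin d → ℝ) 1 ↔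
      ∀ (m : ℕ) (I : Fin m → Fin d → Fin N), ω m I = true := by
  constructor
  · intro hA m I
    have hmid : midpt N I ∈ limitSet N d ω := by
      rw [hA]; exact midpt_mem_Icc hN I
    obtain ⟨J, hJret, hJmem⟩ := mem_limitSet_iff.mp hmid m
    have : J = I := eq_of_strict_mem hN (midpt_strict hN I) hJmem
    rw [← this]
    exact flag_of_retained hJret
  · intro hflag
    apply Set.Subset.antisymm (limitSet_subset_Icc hN ω)
    intro x hx
    rw [mem_limitSet_iff]
    intro m
    obtain ⟨I, hI⟩ := exists_cube_mem hN m hx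
    exact ⟨I, fun l h => hflag l _, hI⟩

/-- if a cube is contained in the limit set then every extension flag is true -/
lemma flag_of_cube_subset (hN : 0 < N) {ω : Config N d} {m : ℕ}
    {I : Fin m → Fin d → Fin N} (hsub : cube N I ⊆ limitSet N d ω)
    {l : ℕ} (h : m ≤ l) (J : Fin l → Fin d → Fin N)
    (hJ : ∀ j : Fin m, J (Fin.castLE h j) = I j) : ω l J = true := by
  have hmid : midpt N J ∈ limitSet N d ω :=
    hsub (cube_prefix_subset hN h I J hJ (midpt_mem_cube hN J))
  obtain ⟨J', hJ'ret, hJ'mem⟩ := mem_limitSet_iff.mp hmid l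
  have : J' = J := eq_of_strict_mem hN (midpt_strict hN J) hJ'mem
  rw [← this]
  exact flag_of_retained hJ'ret

/-- cover of the nonempty-interior event by cube events -/
lemma interior_subset_union (hN : 2 ≤ N) {ω : Config N d}
    (hne : interior (limitSet N d ω) ≠ ∅) :
    ∃ (m : ℕ) (I : Fin m → Fin d → Fin N), cube N I ⊆ limitSet N d ω := by
  have hN0 : 0 < N := by omega
  obtain ⟨x, hx⟩ := Set.nonempty_iff_ne_empty.mpr hne
  rw [mem_interior_iff_mem_nhds, Metric.mem_nhds_iff] at hx
  obtain ⟨ε, hε, hball⟩ := hx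
  have hxmem : x ∈ limitSet N d ω := hball (Metric.mem_ball_self hε)
  have hxIcc : x ∈ Set.Icc (0 : Fin d → ℝ) 1 := limitSet_subset_Icc hN0 ω hxmem
  have hNinv : (1 : ℝ) / N < 1 := by
    rw [div_lt_one (by positivity)]
    exact_mod_cast hN.trans_lt' one_lt_two
  obtain ⟨m, hm⟩ := exists_pow_lt_of_lt_one hε hNinv
  have hm' : (1 : ℝ) / (N : ℝ) ^ m < ε := by
    rw [← one_div_pow]
    exact hm
  obtain ⟨I, hI⟩ := exists_cube_mem hN0 m hxIcc
  refine ⟨m, I, fun y hy => hball ?_⟩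
  rw [Metric.mem_ball]
  have hle : dist y x ≤ 1 / (N : ℝ) ^ m := by
    rw [dist_pi_le_iff (by positivity)]
    intro i
    rw [Real.dist_eq, abs_le]
    obtain ⟨hy1, hy2⟩ := hy i
    obtain ⟨hx1, hx2⟩ := hI i
    constructor <;> linarith
  exact lt_of_le_of_lt hle hm'


end FFPaux

/-- Theorem 5(i) of the paper: if some cube is contained in `D_fat` with positive
probability then `P(D_fat = [0,1]^d) > 0` (translation invariance and FKG); moreover
`P(D_fat = [0,1]^d) = ∏_{n≥1} p_n^{N^{dn}}`, so if `∏_{n≥1} p_n^{N^{dn}} = 0` then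
`D_fat` has empty interior almost surely. -/
theorem stmt15 (N d : ℕ) (hN : 2 ≤ N) (hd : 1 ≤ d)
    (p : ℕ → ℝ) (hp : ∀ m, 0 < p m ∧ p m ≤ 1) (hp0 : p 0 = 1)
    (μ : Measure (Config N d)) [IsProbabilityMeasure μ]
    (hmarg : ∀ (m : ℕ) (I : Fin m → Fin d → Fin N),
      μ {ω | ω m I = true} = ENNReal.ofReal (p m))
    (hindep : ProbabilityTheory.iIndepFun
      (fun (s : Σ m : ℕ, Fin m → Fin d → Fin N) (ω : Config N d) => ω s.1 s.2) μ) :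
    ((∃ (m : ℕ) (I : Fin m → Fin d → Fin N),
        0 < μ {ω | cube N I ⊆ limitSet N d ω}) →
      0 < μ {ω | limitSet N d ω = Set.Icc (0 : Fin d → ℝ) 1}) ∧
    (μ {ω | limitSet N d ω = Set.Icc (0 : Fin d → ℝ) 1} =
      ⨅ M : ℕ, ENNReal.ofReal (∏ m ∈ Finset.range M, p (m + 1) ^ (N ^ (d * (m + 1))))) ∧
    ((⨅ M : ℕ, ∏ m ∈ Finset.range M, p (m + 1) ^ (N ^ (d * (m + 1)))) = 0 →
      ∀ᵐ ω ∂μ, interior (limitSet N d ω) = ∅) := by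
  classical
  have hN0 : 0 < N := by omega
  set A : (Σ l : ℕ, Fin l → Fin d → Fin N) → Set (Config N d) :=
    fun s => {ω | ω s.1 s.2 = true} with hAdef
  have measf : ∀ s : Σ l : ℕ, Fin l → Fin d → Fin N,
      Measurable fun ω : Config N d => ω s.1 s.2 :=
    fun s => (measurable_pi_apply s.2).comp (measurable_pi_apply s.1)
  have measA : ∀ s, MeasurableSet (A s) :=
    fun s => (measf s) (measurableSet_singleton true)
  have hprod : ∀ F : Finset (Σ l : ℕ, Fin l → Fin d → Fin N),
      μ (⋂ s ∈ F, A s) = ∏ s ∈ F, ENNReal.ofReal (p s.1) := by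
    intro F
    have h := (ProbabilityTheory.iIndepFun_iff_measure_inter_preimage_eq_mul.mp hindep) F
      (sets := fun _ => {true}) (fun s _ => measurableSet_singleton true)
    calc μ (⋂ s ∈ F, A s)
        = ∏ s ∈ F, μ ((fun ω : Config N d => ω s.1 s.2) ⁻¹' {true}) := h
      _ = ∏ s ∈ F, ENNReal.ofReal (p s.1) :=
        Finset.prod_congr rfl fun s _ => hmarg s.1 s.2
  have hcard_words : ∀ l : ℕ, Fintype.card (Fin l → Fin d → Fin N) = N ^ (d * l) := by
    intro l
    rw [Fintype.card_fun, Fintype.card_fun]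
    simp [pow_mul, Fintype.card_fin]
  set S : ℕ → Finset (Σ l : ℕ, Fin l → Fin d → Fin N) :=
    fun M => (Finset.range (M + 1)).sigma
      (fun l => (Finset.univ : Finset (Fin l → Fin d → Fin N))) with hSdef
  set E : ℕ → Set (Config N d) := fun M => ⋂ s ∈ S M, A s with hEdef
  have hElem : ∀ (M : ℕ) (ω : Config N d),
      ω ∈ E M ↔ ∀ l ≤ M, ∀ J : Fin l → Fin d → Fin N, ω l J = true := by
    intro M ω
    constructor
    · intro hω l hl J
      have hm : (⟨l, J⟩ : Σ l : ℕ, Fin l → Fin d → Fin N) ∈ S M :=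
        Finset.mem_sigma.mpr ⟨Finset.mem_range.mpr (Nat.lt_succ_of_le hl), Finset.mem_univ _⟩
      exact Set.mem_iInter₂.mp hω ⟨l, J⟩ hm
    · intro h
      refine Set.mem_iInter₂.mpr ?_
      rintro ⟨l, J⟩ hs
      have h1 := (Finset.mem_sigma.mp hs).1
      exact h l (Nat.lt_succ_iff.mp (Finset.mem_range.mp h1)) J
  have measE : ∀ M, μ (E M) =
      ENNReal.ofReal (∏ n ∈ Finset.range M, p (n + 1) ^ N ^ (d * (n + 1))) := by
    intro M
    rw [hEdef]
    rw [hprod (S M), hSdef]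
    rw [Finset.prod_sigma]
    have h1 : ∀ l ∈ Finset.range (M + 1),
        (∏ _J ∈ (Finset.univ : Finset (Fin l → Fin d → Fin N)), ENNReal.ofReal (p l))
          = ENNReal.ofReal (p l ^ N ^ (d * l)) := by
      intro l _
      rw [Finset.prod_const, Finset.card_univ, hcard_words l,
        ← ENNReal.ofReal_pow (hp l).1.le]
    rw [Finset.prod_congr rfl h1,
      ← ENNReal.ofReal_prod_of_nonneg (fun l _ => pow_nonneg (hp l).1.le _)]
    congr 1
    rw [Finset.prod_range_succ']
    simp [hp0]
  have hfull : {ω : Config N d | limitSet N d ω = Set.Icc 0 1} = ⋂ M, E M := by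
    ext ω
    rw [Set.mem_setOf_eq, FFPaux.limitSet_eq_Icc_iff hN0]
    simp only [Set.mem_iInter]
    constructor
    · intro h M; exact (hElem M ω).mpr fun l _ J => h l J
    · intro h m I; exact (hElem m ω).mp (h m) m le_rfl I
  have hanti : ∀ {M M' : ℕ}, M ≤ M' → E M' ⊆ E M := by
    intro M M' h ω hω
    exact (hElem M ω).mpr fun l hl J => (hElem M' ω).mp hω l (le_trans hl h) J
  have hmeasfull : μ {ω : Config N d | limitSet N d ω = Set.Icc 0 1}
      = ⨅ M : ℕ, ENNReal.ofReal (∏ n ∈ Finset.range M, p (n + 1) ^ N ^ (d * (n + 1))) := by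
    rw [hfull,
      Directed.measure_iInter (s := E)
        (fun M => ((MeasurableSet.biInter (S M).countable_toSet
          (fun s _ => measA s)).nullMeasurableSet))
        (fun a b => ⟨max a b, hanti (le_max_left a b), hanti (le_max_right a b)⟩)
        ⟨0, measure_ne_top μ _⟩]
    exact iInf_congr measE
  have parta : (∃ (m : ℕ) (I : Fin m → Fin d → Fin N),
      0 < μ {ω | cube N I ⊆ limitSet N d ω}) →
      0 < μ {ω | limitSet N d ω = Set.Icc (0 : Fin d → ℝ) 1} := by
    rintro ⟨m, I, hpos⟩
    set s0 := {ω : Config N d | cube N I ⊆ limitSet N d ω} with hs0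
    set ext : ∀ l : ℕ, Finset (Fin l → Fin d → Fin N) :=
      fun l => Finset.univ.filter
        (fun J => ∀ (hml : m ≤ l) (j : Fin m), J (Fin.castLE hml j) = I j) with hext
    set F : ℕ → Finset (Σ l : ℕ, Fin l → Fin d → Fin N) :=
      fun K => (Finset.Ico (m + 1) (m + 1 + K)).sigma (fun l => ext l) with hF
    have hsubF : ∀ K, s0 ⊆ ⋂ s ∈ F K, A s := by
      intro K ω hω
      simp only [Set.mem_iInter]
      rintro ⟨l, J⟩ hs
      simp only [hF, Finset.mem_sigma, Finset.mem_Ico, hext, Finset.mem_filter] at hs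
      obtain ⟨⟨hl1, -⟩, -, hJ⟩ := hs
      exact FFPaux.flag_of_cube_subset hN0 hω (by omega) J (hJ (by omega))
    have hcard : ∀ l, m ≤ l → (ext l).card = N ^ (d * (l - m)) := by
      intro l hml
      have e : {J : Fin l → Fin d → Fin N //
          ∀ (hml : m ≤ l) (j : Fin m), J (Fin.castLE hml j) = I j}
          ≃ (Fin (l - m) → Fin d → Fin N) :=
        { toFun := fun J => fun k i => J.1 ⟨m + (k : ℕ), by have := k.isLt; omega⟩ i
          invFun := fun g => ⟨fun j i => if hj : (j : ℕ) < m then I ⟨j, hj⟩ i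
              else g ⟨(j : ℕ) - m, by have := j.isLt; omega⟩ i, by
            intro hml' j
            funext i
            have hj : ((Fin.castLE hml' j : Fin l) : ℕ) < m := by
              simp only [Fin.coe_castLE]
              exact j.isLt
            simp only [dif_pos hj]
            exact congrArg (fun t => I t i) (Fin.ext (by simp))⟩
          left_inv := fun J => by
            apply Subtype.ext
            funext j i
            dsimp only
            by_cases hj : (j : ℕ) < m
            · rw [dif_pos hj]
              have h2 := J.2 hml ⟨(j : ℕ), hj⟩
              have hcast : Fin.castLE hml ⟨(j : ℕ), hj⟩ = j := by
                apply Fin.ext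
                simp [Fin.coe_castLE]
              rw [hcast] at h2
              rw [← h2]
            · rw [dif_neg hj]
              have harg : (⟨m + ((j : ℕ) - m), by have := j.isLt; omega⟩ : Fin l) = j :=
                Fin.ext (show m + ((j : ℕ) - m) = (j : ℕ) from by omega)
              exact congrArg (fun t => J.1 t i) harg
          right_inv := fun g => by
            funext k i
            dsimp only
            rw [dif_neg (by omega)]
            have harg : (⟨m + (k : ℕ) - m, by have := k.isLt; omega⟩ : Fin (l - m)) = k :=
              Fin.ext (show m + (k : ℕ) - m = (k : ℕ) from by omega)
            exact congrArg (fun t => g t i) harg }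
      rw [hext]
      dsimp only
      rw [← Fintype.card_subtype, Fintype.card_congr e, hcard_words]
    have hqK : ∀ K, μ (⋂ s ∈ F K, A s)
        = ENNReal.ofReal
          (∏ l ∈ Finset.Ico (m + 1) (m + 1 + K), p l ^ N ^ (d * (l - m))) := by
      intro K
      rw [hF]
      rw [hprod, Finset.prod_sigma]
      have h1 : ∀ l ∈ Finset.Ico (m + 1) (m + 1 + K),
          (∏ _J ∈ ext l, ENNReal.ofReal (p l)) = ENNReal.ofReal (p l ^ N ^ (d * (l - m))) := by
        intro l hl
        rw [Finset.prod_const, hcard l (by rw [Finset.mem_Ico] at hl; omega),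
          ← ENNReal.ofReal_pow (hp l).1.le]
      rw [Finset.prod_congr rfl h1,
        ← ENNReal.ofReal_prod_of_nonneg (fun l _ => pow_nonneg (hp l).1.le _)]
    set a' := (μ s0).toReal with ha'
    have ha'pos : 0 < a' := ENNReal.toReal_pos hpos.ne' (measure_ne_top μ _)
    have ha'le1 : a' ≤ 1 := by
      have h1 : μ s0 ≤ 1 := prob_le_one
      calc a' ≤ (1 : ℝ≥0∞).toReal := ENNReal.toReal_mono ENNReal.one_ne_top h1
        _ = 1 := ENNReal.toReal_one
    have hqlb : ∀ K, a' ≤ ∏ l ∈ Finset.Ico (m + 1) (m + 1 + K), p l ^ N ^ (d * (l - m)) := by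
      intro K
      have h1 : μ s0 ≤ ENNReal.ofReal
          (∏ l ∈ Finset.Ico (m + 1) (m + 1 + K), p l ^ N ^ (d * (l - m))) := by
        rw [← hqK K]; exact measure_mono (hsubF K)
      have h2 := ENNReal.toReal_mono ENNReal.ofReal_ne_top h1
      rwa [ENNReal.toReal_ofReal
        (Finset.prod_nonneg fun l _ => pow_nonneg (hp l).1.le _)] at h2
    set R : ℕ → ℝ := fun M => ∏ n ∈ Finset.range M, p (n + 1) ^ N ^ (d * (n + 1)) with hR
    have hRpos : ∀ M, 0 < R M := fun M =>
      Finset.prod_pos fun n _ => pow_pos (hp (n + 1)).1 _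
    set c : ℝ := R m * a' ^ N ^ (d * m) with hc
    have hcpos : 0 < c := mul_pos (hRpos m) (pow_pos ha'pos _)
    have hclb : ∀ M, c ≤ R M := by
      intro M
      rcases le_or_gt M m with hMm | hmM
      · have h1 : R m ≤ R M := by
          have hsplit : R M * ∏ n ∈ Finset.Ico M m, p (n + 1) ^ N ^ (d * (n + 1)) = R m :=
            Finset.prod_range_mul_prod_Ico _ hMm
          have hle1 : ∏ n ∈ Finset.Ico M m, p (n + 1) ^ N ^ (d * (n + 1)) ≤ 1 :=
            Finset.prod_le_one (fun n _ => pow_nonneg (hp (n + 1)).1.le _)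
              (fun n _ => pow_le_one₀ (hp (n + 1)).1.le (hp (n + 1)).2)
          calc R m = R M * ∏ n ∈ Finset.Ico M m, p (n + 1) ^ N ^ (d * (n + 1)) := hsplit.symm
            _ ≤ R M * 1 := mul_le_mul_of_nonneg_left hle1 (hRpos M).le
            _ = R M := mul_one _
        have h2 : a' ^ N ^ (d * m) ≤ 1 := pow_le_one₀ ha'pos.le ha'le1
        calc c ≤ R m * 1 := mul_le_mul_of_nonneg_left h2 (hRpos m).le
          _ = R m := mul_one _
          _ ≤ R M := h1
      · set K := M - m with hKK
        have hsplit : R m * ∏ n ∈ Finset.Ico m M, p (n + 1) ^ N ^ (d * (n + 1)) = R M :=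
          Finset.prod_range_mul_prod_Ico _ hmM.le
        have hT : ∏ n ∈ Finset.Ico m M, p (n + 1) ^ N ^ (d * (n + 1))
            = (∏ l ∈ Finset.Ico (m + 1) (m + 1 + K), p l ^ N ^ (d * (l - m))) ^ N ^ (d * m) := by
          rw [← Finset.prod_pow]
          rw [Finset.prod_Ico_eq_prod_range, Finset.prod_Ico_eq_prod_range]
          refine Finset.prod_congr ?_ fun i hi => ?_
          · congr 1; omega
          · have h3 : m + 1 + i - m = i + 1 := by omega
            have h4 : m + 1 + i = m + i + 1 := by omega
            rw [h3, h4, ← pow_mul, ← pow_add]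
            congr 1
            congr 1
            ring
        have hTlb : a' ^ N ^ (d * m)
            ≤ ∏ n ∈ Finset.Ico m M, p (n + 1) ^ N ^ (d * (n + 1)) := by
          rw [hT]
          exact pow_le_pow_left₀ ha'pos.le (hqlb K) _
        calc c = R m * a' ^ N ^ (d * m) := hc
          _ ≤ R m * ∏ n ∈ Finset.Ico m M, p (n + 1) ^ N ^ (d * (n + 1)) :=
            mul_le_mul_of_nonneg_left hTlb (hRpos m).le
          _ = R M := hsplit
    rw [hmeasfull]
    have hle : ENNReal.ofReal c ≤ ⨅ M : ℕ, ENNReal.ofReal (R M) :=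
      le_iInf fun M => ENNReal.ofReal_le_ofReal (hclb M)
    calc (0 : ℝ≥0∞) < ENNReal.ofReal c := ENNReal.ofReal_pos.mpr hcpos
      _ ≤ _ := hle
  refine ⟨parta, hmeasfull, ?_⟩
  intro h0
  have hfull0 : μ {ω : Config N d | limitSet N d ω = Set.Icc 0 1} = 0 := by
    rw [hmeasfull]
    refine le_antisymm ?_ (zero_le)
    have hlim : ∀ ε : ℝ, 0 < ε →
        ∃ M, (∏ n ∈ Finset.range M, p (n + 1) ^ N ^ (d * (n + 1))) < ε := by
      intro ε hε
      by_contra hcon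
      push_neg at hcon
      have h1 : ε ≤ ⨅ M : ℕ, ∏ n ∈ Finset.range M, p (n + 1) ^ N ^ (d * (n + 1)) :=
        le_ciInf hcon
      rw [h0] at h1
      linarith
    refine ENNReal.le_of_forall_pos_le_add fun ε hε _ => ?_
    obtain ⟨M, hM⟩ := hlim ε (by exact_mod_cast hε)
    calc (⨅ M : ℕ, ENNReal.ofReal (∏ n ∈ Finset.range M, p (n + 1) ^ N ^ (d * (n + 1))))
        ≤ ENNReal.ofReal (∏ n ∈ Finset.range M, p (n + 1) ^ N ^ (d * (n + 1))) := iInf_le _ M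
      _ ≤ ENNReal.ofReal (ε : ℝ) := ENNReal.ofReal_le_ofReal hM.le
      _ = (ε : ℝ≥0∞) := ENNReal.ofReal_coe_nnreal
      _ ≤ 0 + ε := by rw [zero_add]
  have hcube0 : ∀ (m : ℕ) (I : Fin m → Fin d → Fin N),
      μ {ω | cube N I ⊆ limitSet N d ω} = 0 := by
    intro m I
    by_contra hne
    have hpos : 0 < μ {ω | cube N I ⊆ limitSet N d ω} := pos_iff_ne_zero.mpr hne
    have := parta ⟨m, I, hpos⟩
    rw [hfull0] at this
    exact lt_irrefl 0 this
  have hsub : {ω : Config N d | interior (limitSet N d ω) ≠ ∅}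
      ⊆ ⋃ s : Σ m : ℕ, Fin m → Fin d → Fin N, {ω | cube N s.2 ⊆ limitSet N d ω} := by
    intro ω hω
    obtain ⟨m, I, h⟩ := FFPaux.interior_subset_union hN hω
    exact Set.mem_iUnion.mpr ⟨⟨m, I⟩, h⟩
  have hnull : μ {ω : Config N d | interior (limitSet N d ω) ≠ ∅} = 0 :=
    measure_mono_null hsub (measure_iUnion_null fun s => hcube0 s.1 s.2)
  rw [MeasureTheory.ae_iff]
  exact hnull
end

section
/- In fat fractal percolation on [0,1]^d, if ∏_{n=1}^∞ p_n^{N^n} > 0 then for every x ∈ [0,1]^{d-1} the probability that the full vertical segment {x}×[0,1] is contained in the limit set satisfies P({x}×[0,1] ⊆ D_fat) ≥ ∏_{n=1}^∞ p_n^{N^n} > 0, and consequently (by Fubini) E[λ_{d-1}({x : {x}×[0,1] ⊆ D_fat})] > 0, so with positive probability the union of connected components larger than a point has positive Lebesgue measure. -/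
open MeasureTheory

/-! ### Auxiliary material -/

/-- The `j`-th base-`N` digit of `y ∈ [0,1]` (with all digits `N-1` for `y = 1`). -/
noncomputable def dig (N : ℕ) (y : ℝ) (j : ℕ) : ℕ :=
  if y = 1 then N - 1 else ⌊y * (N : ℝ) ^ (j + 1)⌋₊ % N

lemma dig_lt (N : ℕ) (hN : 0 < N) (y : ℝ) (j : ℕ) : dig N y j < N := by
  unfold dig; split
  · omega
  · exact Nat.mod_lt _ hN

/-- `dig` as an element of `Fin N`. -/
noncomputable def digF (N : ℕ) (hN : 0 < N) (y : ℝ) (j : ℕ) : Fin N :=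
  ⟨dig N y j, dig_lt N hN y j⟩

lemma sum_dig (N : ℕ) (hN : 2 ≤ N) {y : ℝ} (hy0 : 0 ≤ y) (hy1 : y ≤ 1) (m : ℕ) :
    (∑ j ∈ Finset.range m, (dig N y j : ℝ) / (N : ℝ) ^ (j + 1)) ≤ y ∧
      y ≤ (∑ j ∈ Finset.range m, (dig N y j : ℝ) / (N : ℝ) ^ (j + 1)) + 1 / (N : ℝ) ^ m := by
  have hN0 : (0 : ℝ) < N := by
    have : (2 : ℝ) ≤ N := by exact_mod_cast hN
    linarith
  have hNe : (N : ℝ) ≠ 0 := ne_of_gt hN0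
  rcases eq_or_lt_of_le hy1 with h1 | h1
  · -- y = 1
    subst h1
    have hdig : ∀ j, dig N (1 : ℝ) j = N - 1 := fun j => if_pos rfl
    have hsum : ∀ k : ℕ, (∑ j ∈ Finset.range k, (dig N (1 : ℝ) j : ℝ) / (N : ℝ) ^ (j + 1))
        = 1 - 1 / (N : ℝ) ^ k := by
      intro k
      induction k with
      | zero => simp
      | succ k ih =>
        rw [Finset.sum_range_succ, ih, hdig k]
        have hc : ((N - 1 : ℕ) : ℝ) = (N : ℝ) - 1 := by
          have : 1 ≤ N := by omega
          push_cast [Nat.cast_sub this]; ring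
        rw [hc]
        field_simp
        ring
    rw [hsum m]
    have hpow : (0 : ℝ) < (N : ℝ) ^ m := pow_pos hN0 m
    constructor
    · have : 0 < 1 / (N : ℝ) ^ m := by positivity
      linarith
    · linarith
  · -- y < 1
    have key : ∀ k : ℕ, (∑ j ∈ Finset.range k, (dig N y j : ℝ) / (N : ℝ) ^ (j + 1))
        = (⌊y * (N : ℝ) ^ k⌋₊ : ℝ) / (N : ℝ) ^ k := by
      intro k
      induction k with
      | zero =>
        simp [Nat.floor_eq_zero.mpr h1]
      | succ k ih =>
        rw [Finset.sum_range_succ, ih]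
        have hdig : dig N y k = ⌊y * (N : ℝ) ^ (k + 1)⌋₊ % N := if_neg (ne_of_lt h1)
        have hdiv : ⌊y * (N : ℝ) ^ k⌋₊ = ⌊y * (N : ℝ) ^ (k + 1)⌋₊ / N := by
          rw [← Nat.floor_div_natCast]
          congr 1
          rw [pow_succ]
          field_simp
        set a := ⌊y * (N : ℝ) ^ (k + 1)⌋₊ with ha
        rw [hdig, hdiv]
        have hmd := Nat.mod_add_div a N
        have hcast : ((a % N : ℕ) : ℝ) = (a : ℝ) - (N : ℝ) * ((a / N : ℕ) : ℝ) := by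
          have : ((a % N + N * (a / N) : ℕ) : ℝ) = (a : ℝ) := by
            exact_mod_cast congrArg (Nat.cast : ℕ → ℝ) hmd
          push_cast at this
          linarith
        rw [hcast]
        field_simp
        ring
    rw [key m]
    have h0 : 0 ≤ y * (N : ℝ) ^ m := by positivity
    have hfl := Nat.floor_le h0
    have hfl2 := Nat.lt_floor_add_one (y * (N : ℝ) ^ m)
    have hpow : (0 : ℝ) < (N : ℝ) ^ m := pow_pos hN0 m
    constructor
    · exact (div_le_iff₀ hpow).mpr hfl
    · rw [← add_div, le_div_iff₀ hpow]
      linarith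

/-- The digit word at level `m` combining the digits of `x` horizontally and `v` vertically. -/
noncomputable def word (N d : ℕ) (hN : 0 < N) (x : Fin d → ℝ) {m : ℕ} (v : Fin m → Fin N) :
    Fin m → Fin (d + 1) → Fin N :=
  fun j => Fin.snoc (fun i => digF N hN (x i) (j : ℕ)) (v j)

lemma word_injective (N d : ℕ) (hN : 0 < N) (x : Fin d → ℝ) (m : ℕ) :
    Function.Injective (fun v : Fin m → Fin N => word N d hN x v) := by
  intro v v' h
  funext j
  have := congrFun (congrFun h j) (Fin.last d)
  simpa [word, Fin.snoc_last] using this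

/-- The vertical digit word of `t` at level `m`. -/
noncomputable def vw (N : ℕ) (hN : 0 < N) (t : ℝ) (m : ℕ) : Fin m → Fin N :=
  fun j => digF N hN t (j : ℕ)

lemma mem_cube_word {N d : ℕ} (hN : 2 ≤ N) (hN0 : 0 < N) {x : Fin d → ℝ}
    (hx : x ∈ Set.Icc (0 : Fin d → ℝ) 1) {t : ℝ} (ht : t ∈ Set.Icc (0 : ℝ) 1) (m : ℕ) :
    Fin.snoc x t ∈ cube N (word N d hN0 x (vw N hN0 t m)) := by
  intro i
  have corner_eq : ∀ y : ℝ, ∀ i : Fin (d + 1),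
      (∀ j : Fin m, word N d hN0 x (vw N hN0 t m) j i = digF N hN0 y (j : ℕ)) →
      corner N (word N d hN0 x (vw N hN0 t m)) i
        = ∑ j ∈ Finset.range m, (dig N y j : ℝ) / (N : ℝ) ^ (j + 1) := by
    intro y i hy
    unfold corner
    rw [← Fin.sum_univ_eq_sum_range (fun j => (dig N y j : ℝ) / (N : ℝ) ^ (j + 1)) m]
    refine Finset.sum_congr rfl fun j _ => ?_
    rw [hy j]; rfl
  refine Fin.lastCases ?_ ?_ i
  · rw [corner_eq t (Fin.last d) (fun j => by simp [word, Fin.snoc_last, vw])]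
    simpa [Fin.snoc_last] using sum_dig N hN ht.1 ht.2 m
  · intro i'
    rw [corner_eq (x i') (Fin.castSucc i') (fun j => by simp [word, Fin.snoc_castSucc])]
    simpa [Fin.snoc_castSucc] using sum_dig N hN (hx.1 i') (hx.2 i') m

/-- The level-`m` approximation of the limit set. -/
def levelSet (N d : ℕ) (ω : Config N d) (m : ℕ) : Set (Fin d → ℝ) :=
  ⋃ I ∈ {I : Fin m → Fin d → Fin N | retained N d ω I}, cube N I

lemma limitSet_eq (N d : ℕ) (ω : Config N d) :
    limitSet N d ω = ⋂ m : ℕ, levelSet N d ω m := rfl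

lemma isClosed_cube (N : ℕ) {d m : ℕ} (I : Fin m → Fin d → Fin N) : IsClosed (cube N I) := by
  have : cube N I = ⋂ i : Fin d,
      (fun x : Fin d → ℝ => x i) ⁻¹' Set.Icc (corner N I i) (corner N I i + 1 / (N : ℝ) ^ m) := by
    ext x; simp [cube, Set.mem_iInter, Set.mem_Icc]
  rw [this]
  exact isClosed_iInter fun i => IsClosed.preimage (continuous_apply i) isClosed_Icc

lemma isClosed_levelSet (N d : ℕ) (ω : Config N d) (m : ℕ) : IsClosed (levelSet N d ω m) :=
  Set.Finite.isClosed_biUnion (Set.toFinite _) fun I _ => isClosed_cube N I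

lemma continuous_snoc_right {d : ℕ} (x : Fin d → ℝ) :
    Continuous fun t : ℝ => (Fin.snoc x t : Fin (d + 1) → ℝ) := by
  refine continuous_pi fun i => ?_
  refine Fin.lastCases ?_ ?_ i
  · simpa [Fin.snoc_last] using continuous_id'
  · intro j; simpa [Fin.snoc_castSucc] using continuous_const

lemma continuous_snoc_left {d : ℕ} (t : ℝ) :
    Continuous fun x : Fin d → ℝ => (Fin.snoc x t : Fin (d + 1) → ℝ) := by
  refine continuous_pi fun i => ?_
  refine Fin.lastCases ?_ ?_ i
  · simpa [Fin.snoc_last] using continuous_const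
  · intro j; simpa [Fin.snoc_castSucc] using continuous_apply j

/-- A rational parameter clamped into `[0,1]`. -/
noncomputable def projQ (q : ℚ) : ℝ := max 0 (min (q : ℝ) 1)

lemma projQ_mem (q : ℚ) : projQ q ∈ Set.Icc (0 : ℝ) 1 :=
  ⟨le_max_left _ _, max_le zero_le_one (min_le_right _ _)⟩

/-- Density argument: containment of the segment in a closed set can be checked on
clamped rationals. -/
lemma seg_subset_of_rat {d : ℕ} (x : Fin d → ℝ) {F : Set (Fin (d + 1) → ℝ)} (hF : IsClosed F)
    (h : ∀ q : ℚ, Fin.snoc x (projQ q) ∈ F) :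
    ∀ t ∈ Set.Icc (0 : ℝ) 1, Fin.snoc x t ∈ F := by
  intro t ht
  set G : Set ℝ := (fun t : ℝ => (Fin.snoc x t : Fin (d + 1) → ℝ)) ⁻¹' F with hG
  have hGclosed : IsClosed G := hF.preimage (continuous_snoc_right x)
  have hrange : Set.range (fun q : ℚ => projQ q) ⊆ G := by
    rintro _ ⟨q, rfl⟩; exact h q
  have hproj : Continuous fun r : ℝ => max 0 (min r 1) :=
    continuous_const.max (continuous_id.min continuous_const)
  have ht' : t ∈ closure (Set.range fun q : ℚ => projQ q) := by
    have h1 : t = max 0 (min t 1) := by rw [min_eq_left ht.2, max_eq_right ht.1]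
    have h2 : t ∈ (fun r : ℝ => max 0 (min r 1)) '' closure (Set.range ((↑) : ℚ → ℝ)) := by
      rw [Rat.denseRange_cast.closure_range]
      exact ⟨t, Set.mem_univ t, h1.symm⟩
    have h4 := (image_closure_subset_closure_image (s := Set.range ((↑) : ℚ → ℝ)) hproj) h2
    rwa [← Set.range_comp] at h4
  exact closure_minimal hrange hGclosed ht'

/-- Theorem 5(ii) of the paper, in dimension `d+1 ≥ 2`: if `∏_{n≥1} p_n^{N^n} > 0` then
for every `x ∈ [0,1]^d` the vertical segment `{x} × [0,1]` is contained in `D_fat` with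
probability at least `∏_{n≥1} p_n^{N^n} > 0`; consequently (by Fubini) the expected
`d`-dimensional Lebesgue measure of the set of such `x` is positive, and with positive
probability the union of connected components of `D_fat` larger than one point has
positive Lebesgue measure. -/
theorem stmt16 (N d : ℕ) (hN : 2 ≤ N) (hd : 1 ≤ d)
    (p : ℕ → ℝ) (hp : ∀ m, 0 < p m ∧ p m ≤ 1) (hp0 : p 0 = 1)
    (μ : Measure (Config N (d + 1))) [IsProbabilityMeasure μ]
    (hmarg : ∀ (m : ℕ) (I : Fin m → Fin (d + 1) → Fin N),
      μ {ω | ω m I = true} = ENNReal.ofReal (p m))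
    (hindep : ProbabilityTheory.iIndepFun
      (fun (s : Σ m : ℕ, Fin m → Fin (d + 1) → Fin N) (ω : Config N (d + 1)) => ω s.1 s.2)
      μ)
    (hprod : 0 < ⨅ M : ℕ, ∏ m ∈ Finset.range M, p (m + 1) ^ (N ^ (m + 1))) :
    (∀ x : Fin d → ℝ, x ∈ Set.Icc (0 : Fin d → ℝ) 1 →
      ENNReal.ofReal (⨅ M : ℕ, ∏ m ∈ Finset.range M, p (m + 1) ^ (N ^ (m + 1))) ≤
        μ {ω | ∀ t ∈ Set.Icc (0 : ℝ) 1, Fin.snoc x t ∈ limitSet N (d + 1) ω}) ∧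
    (0 < ∫⁻ ω, volume {x : Fin d → ℝ | x ∈ Set.Icc (0 : Fin d → ℝ) 1 ∧
        ∀ t ∈ Set.Icc (0 : ℝ) 1, Fin.snoc x t ∈ limitSet N (d + 1) ω} ∂μ) ∧
    (0 < μ {ω | 0 < volume {z : Fin (d + 1) → ℝ | z ∈ limitSet N (d + 1) ω ∧
        connectedComponentIn (limitSet N (d + 1) ω) z ≠ {z}}}) := by
  classical
  have hN0 : 0 < N := by omega
  set c : ℝ := ⨅ M : ℕ, ∏ m ∈ Finset.range M, p (m + 1) ^ (N ^ (m + 1)) with hc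
  have hcbdd : BddBelow (Set.range fun M : ℕ => ∏ m ∈ Finset.range M, p (m + 1) ^ (N ^ (m + 1))) :=
    ⟨0, by rintro r ⟨M, rfl⟩; exact Finset.prod_nonneg fun i _ => pow_nonneg (hp _).1.le _⟩
  have hmeasEv : ∀ (l : ℕ) (J : Fin l → Fin (d + 1) → Fin N),
      MeasurableSet {ω : Config N (d + 1) | ω l J = true} := by
    intro l J
    have hm : Measurable fun ω : Config N (d + 1) => ω l J :=
      (measurable_pi_apply J).comp (measurable_pi_apply l)
    exact hm (measurableSet_singleton true)
  -- Part 1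
  have part1 : ∀ x : Fin d → ℝ, x ∈ Set.Icc (0 : Fin d → ℝ) 1 →
      ENNReal.ofReal c ≤
        μ {ω | ∀ t ∈ Set.Icc (0 : ℝ) 1, Fin.snoc x t ∈ limitSet N (d + 1) ω} := by
    intro x hx
    set T : ℕ → Finset (Σ m : ℕ, Fin m → Fin (d + 1) → Fin N) :=
      fun M => (Finset.range (M + 1)).sigma fun m =>
        Finset.image (fun v : Fin m → Fin N => word N d hN0 x v) Finset.univ with hT
    set A : ℕ → Set (Config N (d + 1)) :=
      fun M => ⋂ s ∈ T M, {ω : Config N (d + 1) | ω s.1 s.2 = true} with hA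
    have hmemT : ∀ (m : ℕ) (v : Fin m → Fin N) (M : ℕ), m ≤ M →
        (⟨m, word N d hN0 x v⟩ : Σ m : ℕ, Fin m → Fin (d + 1) → Fin N) ∈ T M := by
      intro m v M hm
      simp only [hT, Finset.mem_sigma, Finset.mem_range, Finset.mem_image]
      exact ⟨by omega, v, Finset.mem_univ v, rfl⟩
    have hAmeas : ∀ M, MeasurableSet (A M) :=
      fun M => (T M).measurableSet_biInter fun s _ => hmeasEv s.1 s.2
    have hAanti : Antitone A := by
      intro M M' hMM' ω hω
      simp only [hA, Set.mem_iInter] at hω ⊢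
      intro s hs
      refine hω s ?_
      simp only [hT, Finset.mem_sigma, Finset.mem_range] at hs ⊢
      exact ⟨by omega, hs.2⟩
    have hμA : ∀ M, μ (A M)
        = ENNReal.ofReal (∏ m ∈ Finset.range M, p (m + 1) ^ (N ^ (m + 1))) := by
      intro M
      have hind := hindep.meas_biInter (S := T M)
        (s := fun s => {ω : Config N (d + 1) | ω s.1 s.2 = true})
        (fun s _ => MeasurableSpace.measurableSet_comap.mpr
          ⟨{true}, measurableSet_singleton true, rfl⟩)
      rw [hA, hind, Finset.prod_congr rfl
        (fun s _ => hmarg s.1 s.2 :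
          ∀ s ∈ T M, μ {ω : Config N (d + 1) | ω s.1 s.2 = true} = ENNReal.ofReal (p s.1)),
        hT, Finset.prod_sigma]
      have hcard : ∀ m : ℕ,
          (Finset.image (fun v : Fin m → Fin N => word N d hN0 x v) Finset.univ).card
            = N ^ m := by
        intro m
        rw [Finset.card_image_of_injective _ (word_injective N d hN0 x m), Finset.card_univ]
        simp [Fintype.card_fun]
      calc (∏ m ∈ Finset.range (M + 1),
              ∏ _I ∈ Finset.image (fun v : Fin m → Fin N => word N d hN0 x v) Finset.univ,
                ENNReal.ofReal (p m))
          = ∏ m ∈ Finset.range (M + 1), ENNReal.ofReal (p m) ^ (N ^ m) := by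
            refine Finset.prod_congr rfl fun m _ => ?_
            rw [Finset.prod_const, hcard m]
        _ = ∏ m ∈ Finset.range (M + 1), ENNReal.ofReal (p m ^ (N ^ m)) := by
            refine Finset.prod_congr rfl fun m _ => ?_
            rw [ENNReal.ofReal_pow (hp m).1.le]
        _ = ENNReal.ofReal (∏ m ∈ Finset.range (M + 1), p m ^ (N ^ m)) :=
            (ENNReal.ofReal_prod_of_nonneg fun m _ => pow_nonneg (hp m).1.le _).symm
        _ = ENNReal.ofReal (∏ m ∈ Finset.range M, p (m + 1) ^ (N ^ (m + 1))) := by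
            rw [Finset.prod_range_succ']
            simp [hp0]
    have hiInf : μ (⋂ M, A M) = ⨅ M, μ (A M) :=
      hAanti.measure_iInter (fun M => (hAmeas M).nullMeasurableSet) ⟨0, measure_ne_top μ _⟩
    have hsubset : (⋂ M, A M)
        ⊆ {ω | ∀ t ∈ Set.Icc (0 : ℝ) 1, Fin.snoc x t ∈ limitSet N (d + 1) ω} := by
      intro ω hω
      have hall : ∀ (m : ℕ) (v : Fin m → Fin N), ω m (word N d hN0 x v) = true := by
        intro m v
        have h1 : ω ∈ A m := Set.mem_iInter.mp hω m
        simp only [hA, Set.mem_iInter] at h1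
        exact h1 ⟨m, word N d hN0 x v⟩ (hmemT m v m le_rfl)
      intro t ht
      rw [limitSet_eq]
      refine Set.mem_iInter.mpr fun m => ?_
      exact Set.mem_biUnion (fun l hl => hall l (vw N hN0 t l))
        (mem_cube_word hN hN0 hx ht m)
    refine le_trans ?_ (measure_mono hsubset)
    rw [hiInf]
    refine le_iInf fun M => ?_
    rw [hμA M]
    exact ENNReal.ofReal_le_ofReal (ciInf_le hcbdd M)
  -- the joint measurable set
  set S : Set (Config N (d + 1) × (Fin d → ℝ)) :=
    {q | q.2 ∈ Set.Icc (0 : Fin d → ℝ) 1 ∧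
      ∀ t ∈ Set.Icc (0 : ℝ) 1, Fin.snoc q.2 t ∈ limitSet N (d + 1) q.1} with hSdef
  have hretmeas : ∀ (m : ℕ) (I : Fin m → Fin (d + 1) → Fin N),
      MeasurableSet {ω : Config N (d + 1) | retained N (d + 1) ω I} := by
    intro m I
    have : {ω : Config N (d + 1) | retained N (d + 1) ω I}
        = ⋂ (l : ℕ), ⋂ (h : l ≤ m),
            {ω : Config N (d + 1) | ω l (fun j => I (Fin.castLE h j)) = true} := by
      ext ω; simp [retained, Set.mem_iInter]
    rw [this]
    exact MeasurableSet.iInter fun l => MeasurableSet.iInter fun h => hmeasEv _ _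
  have hSeq : S = (Set.univ ×ˢ Set.Icc (0 : Fin d → ℝ) 1) ∩
      ⋂ (m : ℕ), ⋂ (q : ℚ), ⋃ (I : Fin m → Fin (d + 1) → Fin N),
        ({ω : Config N (d + 1) | retained N (d + 1) ω I} ×ˢ
          {y : Fin d → ℝ | Fin.snoc y (projQ q) ∈ cube N I}) := by
    ext ⟨ω, y⟩
    simp only [hSdef, Set.mem_setOf_eq, Set.mem_inter_iff, Set.mem_prod, Set.mem_univ, true_and,
      Set.mem_iInter, Set.mem_iUnion]
    constructor
    · rintro ⟨hy, hseg⟩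
      refine ⟨hy, fun m q => ?_⟩
      have h2 := Set.mem_iInter.mp (by rw [← limitSet_eq]; exact hseg (projQ q) (projQ_mem q)) m
      rw [levelSet, Set.mem_iUnion₂] at h2
      obtain ⟨I, hI, hcube⟩ := h2
      exact ⟨I, hI, hcube⟩
    · rintro ⟨hy, hseg⟩
      refine ⟨hy, fun t ht => ?_⟩
      rw [limitSet_eq]
      refine Set.mem_iInter.mpr fun m => ?_
      refine seg_subset_of_rat y (isClosed_levelSet N (d + 1) ω m) (fun q => ?_) t ht
      obtain ⟨I, hI, hcube⟩ := hseg m q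
      exact Set.mem_biUnion hI hcube
  have hS : MeasurableSet S := by
    rw [hSeq]
    refine (MeasurableSet.univ.prod measurableSet_Icc).inter ?_
    refine MeasurableSet.iInter fun m => MeasurableSet.iInter fun q =>
      MeasurableSet.iUnion fun I => ?_
    exact (hretmeas m I).prod
      (((isClosed_cube N I).preimage (continuous_snoc_left (projQ q))).measurableSet)
  have hslice : ∀ ω, Prod.mk ω ⁻¹' S
      = {x : Fin d → ℝ | x ∈ Set.Icc (0 : Fin d → ℝ) 1 ∧
          ∀ t ∈ Set.Icc (0 : ℝ) 1, Fin.snoc x t ∈ limitSet N (d + 1) ω} := fun ω => rfl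
  -- Part 2
  have hprodS : ENNReal.ofReal c ≤ (μ.prod volume) S := by
    rw [Measure.prod_apply_symm hS]
    have hpt : ∀ x : Fin d → ℝ,
        (Set.Icc (0 : Fin d → ℝ) 1).indicator (fun _ => ENNReal.ofReal c) x
          ≤ μ ((fun ω => (ω, x)) ⁻¹' S) := by
      intro x
      by_cases hx : x ∈ Set.Icc (0 : Fin d → ℝ) 1
      · rw [Set.indicator_of_mem hx]
        exact le_trans (part1 x hx) (measure_mono fun ω hω => ⟨hx, hω⟩)
      · rw [Set.indicator_of_notMem hx]; exact zero_le
    calc ENNReal.ofReal c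
        = ENNReal.ofReal c * volume (Set.Icc (0 : Fin d → ℝ) 1) := by
          rw [Real.volume_Icc_pi]; simp
      _ = ∫⁻ x, (Set.Icc (0 : Fin d → ℝ) 1).indicator (fun _ => ENNReal.ofReal c) x ∂volume := by
          rw [lintegral_indicator measurableSet_Icc, setLIntegral_const]
      _ ≤ ∫⁻ x, μ ((fun ω => (ω, x)) ⁻¹' S) ∂volume := lintegral_mono hpt
  have part2 : 0 < ∫⁻ ω, volume {x : Fin d → ℝ | x ∈ Set.Icc (0 : Fin d → ℝ) 1 ∧
      ∀ t ∈ Set.Icc (0 : ℝ) 1, Fin.snoc x t ∈ limitSet N (d + 1) ω} ∂μ := by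
    have h1 : (μ.prod volume) S = ∫⁻ ω, volume (Prod.mk ω ⁻¹' S) ∂μ := Measure.prod_apply hS
    have h2 : 0 < (μ.prod volume) S :=
      lt_of_lt_of_le (ENNReal.ofReal_pos.mpr hprod) hprodS
    rw [h1] at h2
    simpa only [hslice] using h2
  refine ⟨part1, part2, ?_⟩
  -- Part 3
  by_contra hcon
  have hE0 : μ {ω | 0 < volume {z : Fin (d + 1) → ℝ | z ∈ limitSet N (d + 1) ω ∧
      connectedComponentIn (limitSet N (d + 1) ω) z ≠ {z}}} = 0 :=
    le_antisymm (not_lt.mp hcon) zero_le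
  have hsub : {ω : Config N (d + 1) | volume (Prod.mk ω ⁻¹' S) ≠ 0}
      ⊆ {ω | 0 < volume {z : Fin (d + 1) → ℝ | z ∈ limitSet N (d + 1) ω ∧
          connectedComponentIn (limitSet N (d + 1) ω) z ≠ {z}}} := by
    intro ω hω
    simp only [Set.mem_setOf_eq] at hω ⊢
    set e := MeasurableEquiv.piFinSuccAbove (fun _ : Fin (d + 1) => ℝ) (Fin.last d) with he
    have hSx : MeasurableSet (Prod.mk ω ⁻¹' S) := measurable_prodMk_left hS
    have hez : ∀ z : Fin (d + 1) → ℝ, e z = (z (Fin.last d), Fin.init z) := by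
      intro z
      simp [he, MeasurableEquiv.piFinSuccAbove_apply]
    have hTsub : (⇑e) ⁻¹' ((Set.Icc (0 : ℝ) 1) ×ˢ (Prod.mk ω ⁻¹' S))
        ⊆ {z : Fin (d + 1) → ℝ | z ∈ limitSet N (d + 1) ω ∧
            connectedComponentIn (limitSet N (d + 1) ω) z ≠ {z}} := by
      intro z hz
      rw [Set.mem_preimage, hez z, Set.mem_prod] at hz
      obtain ⟨hzt, hzS⟩ := hz
      obtain ⟨hinit, hseg⟩ : Fin.init z ∈ Set.Icc (0 : Fin d → ℝ) 1 ∧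
          ∀ t ∈ Set.Icc (0 : ℝ) 1, Fin.snoc (Fin.init z) t ∈ limitSet N (d + 1) ω := hzS
      constructor
      · have := hseg (z (Fin.last d)) hzt
        rwa [Fin.snoc_init_self] at this
      · intro hcomp
        set K := (fun t : ℝ => (Fin.snoc (Fin.init z) t : Fin (d + 1) → ℝ)) '' Set.Icc 0 1
          with hK
        have hKconn : IsPreconnected K :=
          isPreconnected_Icc.image _ (continuous_snoc_right (Fin.init z)).continuousOn
        have hKz : z ∈ K := ⟨z (Fin.last d), hzt, Fin.snoc_init_self z⟩
        have hKsub : K ⊆ limitSet N (d + 1) ω := by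
          rintro _ ⟨t, ht, rfl⟩; exact hseg t ht
        have hKcomp : K ⊆ connectedComponentIn (limitSet N (d + 1) ω) z :=
          hKconn.subset_connectedComponentIn hKz hKsub
        rw [hcomp] at hKcomp
        have h0 : (Fin.snoc (Fin.init z) (0 : ℝ) : Fin (d + 1) → ℝ) ∈ K :=
          ⟨0, by norm_num, rfl⟩
        have h1 : (Fin.snoc (Fin.init z) (1 : ℝ) : Fin (d + 1) → ℝ) ∈ K :=
          ⟨1, by norm_num, rfl⟩
        have e0 : (Fin.snoc (Fin.init z) (0 : ℝ) : Fin (d + 1) → ℝ) = z :=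
          Set.eq_of_mem_singleton (hKcomp h0)
        have e1 : (Fin.snoc (Fin.init z) (1 : ℝ) : Fin (d + 1) → ℝ) = z :=
          Set.eq_of_mem_singleton (hKcomp h1)
        have h01 : (0 : ℝ) = 1 := by
          have := congrFun (e0.trans e1.symm) (Fin.last d)
          simpa [Fin.snoc_last] using this
        norm_num at h01
    have hvol : volume ((⇑e) ⁻¹' ((Set.Icc (0 : ℝ) 1) ×ˢ (Prod.mk ω ⁻¹' S)))
        = volume (Prod.mk ω ⁻¹' S) := by
      rw [(volume_preserving_piFinSuccAbove (fun _ : Fin (d + 1) => ℝ)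
        (Fin.last d)).measure_preimage ((measurableSet_Icc.prod hSx).nullMeasurableSet)]
      rw [Measure.volume_eq_prod, Measure.prod_prod, Real.volume_Icc]
      norm_num
    calc (0 : ENNReal) < volume (Prod.mk ω ⁻¹' S) := pos_iff_ne_zero.mpr hω
      _ = volume ((⇑e) ⁻¹' ((Set.Icc (0 : ℝ) 1) ×ˢ (Prod.mk ω ⁻¹' S))) := hvol.symm
      _ ≤ volume {z : Fin (d + 1) → ℝ | z ∈ limitSet N (d + 1) ω ∧
            connectedComponentIn (limitSet N (d + 1) ω) z ≠ {z}} := measure_mono hTsub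
  have h0 : μ {ω : Config N (d + 1) | volume (Prod.mk ω ⁻¹' S) ≠ 0} = 0 :=
    measure_mono_null hsub hE0
  have hae : ∀ᵐ ω ∂μ, volume (Prod.mk ω ⁻¹' S) = 0 := by
    rw [ae_iff]
    convert h0 using 2
  have hz2 : ∫⁻ ω, volume (Prod.mk ω ⁻¹' S) ∂μ = 0 := by
    rw [lintegral_congr_ae (hae.mono fun ω h => h), lintegral_zero]
  rw [show (fun ω => volume {x : Fin d → ℝ | x ∈ Set.Icc (0 : Fin d → ℝ) 1 ∧
      ∀ t ∈ Set.Icc (0 : ℝ) 1, Fin.snoc x t ∈ limitSet N (d + 1) ω})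
      = fun ω => volume (Prod.mk ω ⁻¹' S) from funext fun ω => by rw [hslice ω]] at part2
  rw [hz2] at part2
  exact lt_irrefl 0 part2
end
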